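/- arXiv:2401.03213 — 5 statements merged into one kernel-verified Lean document; each statement's English description precedes it below -/
import Mathlib

section
/- For positive integers $i, j$ and complex numbers $m, n$ which are positive integers, the partial fraction decomposition $\frac{1}{m^i n^j} = \sum_{\mu=1}^{i+j-1} \left( \binom{\mu-1}{i-1} \frac{1}{n^{i+j-\mu}(m+n)^\mu} + \binom{\mu-1}{j-1} \frac{1}{m^{i+j-\mu}(m+n)^\mu} \right)$ holds. -/
private noncomputable def Sf (m n : ℂ) (a b : ℕ) : ℂ :=
  ∑ k ∈ Finset.range (a+1), (Nat.choose (b+k) k : ℂ) * m^k * (m+n)^(a-k)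

private lemma Sf_succ (m n : ℂ) (a b : ℕ) :
    Sf m n (a+1) b = (m+n) * Sf m n a b + (Nat.choose (a+b+1) (a+1) : ℂ) * m^(a+1) := by
  unfold Sf
  rw [Finset.sum_range_succ, Finset.mul_sum]
  congr 1
  · apply Finset.sum_congr rfl
    intro k hk
    rw [Finset.mem_range] at hk
    have : a + 1 - k = (a - k) + 1 := by omega
    rw [this]; ring
  · have : b + (a+1) = a + b + 1 := by omega
    rw [this]; simp

private lemma Sf_shift (m n : ℂ) (a b : ℕ) :
    (m+n) * Sf m n a b = n * Sf m n a (b+1) + (Nat.choose (a+b+1) a : ℂ) * m^(a+1) := by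
  induction a with
  | zero => simp [Sf]; ring
  | succ a ih =>
    rw [Sf_succ, Sf_succ]
    have hp : ((a+b+2).choose (a+1) : ℂ) = ((a+b+1).choose a : ℂ) + ((a+b+1).choose (a+1) : ℂ) := by
      rw [show a+b+2 = (a+b+1)+1 by omega, Nat.choose_succ_succ]
      push_cast; ring
    have h1 : a + 1 + b + 1 = a + b + 2 := by omega
    have h2 : a + (b+1) + 1 = a + b + 2 := by omega
    rw [h1, h2]
    linear_combination (m+n) * ih - (m^(a+1)*(m+n)) * hp
private lemma Sf_base (m n : ℂ) (a : ℕ) :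
    (m+n)^(a+1) = m^(a+1) + n * Sf m n a 0 := by
  induction a with
  | zero => norm_num [Sf]
  | succ a ih =>
    have h := Sf_succ m n a 0
    simp only [Nat.add_zero, Nat.choose_self] at h
    calc (m+n)^(a+2) = (m+n) * (m+n)^(a+1) := by ring
    _ = (m+n) * (m^(a+1) + n * Sf m n a 0) := by rw [ih]
    _ = m^(a+2) + n * Sf m n (a+1) 0 := by rw [h]; push_cast; ring

private lemma main_poly (m n : ℂ) (a b : ℕ) :
    (m+n)^(a+b+1) = m^(a+1) * Sf n m b a + n^(b+1) * Sf m n a b := by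
  induction b with
  | zero =>
    have : Sf n m 0 a = 1 := by simp [Sf]
    rw [this]
    have := Sf_base m n a
    linear_combination this
  | succ b ih =>
    have h1 := Sf_succ n m b a
    have h2 := Sf_shift m n a b
    have hc : ((b+a+1).choose (b+1) : ℂ) = ((a+b+1).choose a : ℂ) := by
      congr 1
      rw [show b+a+1 = a+b+1 by omega, ← Nat.choose_symm (by omega : b+1 ≤ a+b+1),
        show a+b+1-(b+1) = a by omega]
    have hadd : (n + m) = (m + n) := by ring
    rw [show a+(b+1)+1 = (a+b+1)+1 by omega]
    calc (m+n)^(a+b+1+1) = (m+n) * (m+n)^(a+b+1) := by ring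
    _ = (m+n) * (m^(a+1) * Sf n m b a + n^(b+1) * Sf m n a b) := by rw [ih]
    _ = m^(a+1) * Sf n m (b+1) a + n^(b+1+1) * Sf m n a (b+1) := by
        rw [h1, hc]
        linear_combination n^(b+1) * h2
theorem partial_fraction_decomposition (i j : ℕ) (hi : 1 ≤ i) (hj : 1 ≤ j)
    (m n : ℂ) (hm : ∃ a : ℕ+, m = (a : ℕ)) (hn : ∃ b : ℕ+, n = (b : ℕ)) :
    1 / (m ^ i * n ^ j) =
      ∑ μ ∈ Finset.Icc 1 (i + j - 1),
        ((Nat.choose (μ - 1) (i - 1) : ℂ) / (n ^ (i + j - μ) * (m + n) ^ μ) +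
          (Nat.choose (μ - 1) (j - 1) : ℂ) / (m ^ (i + j - μ) * (m + n) ^ μ)) := by
  obtain ⟨a, rfl⟩ : ∃ a, i = a + 1 := ⟨i - 1, by omega⟩
  obtain ⟨b, rfl⟩ : ∃ b, j = b + 1 := ⟨j - 1, by omega⟩
  obtain ⟨a', rfl⟩ := hm
  obtain ⟨b', rfl⟩ := hn
  set m : ℂ := ((a' : ℕ) : ℂ) with hmdef
  set n : ℂ := ((b' : ℕ) : ℂ) with hndef
  have hm0 : m ≠ 0 := by
    rw [hmdef]; exact_mod_cast Nat.cast_ne_zero.mpr a'.ne_zero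
  have hn0 : n ≠ 0 := by
    rw [hndef]; exact_mod_cast Nat.cast_ne_zero.mpr b'.ne_zero
  have hmn : m + n ≠ 0 := by
    rw [hmdef, hndef, ← Nat.cast_add]
    have h0 : ((a' : ℕ) + (b' : ℕ)) ≠ 0 := by have := a'.pos; omega
    exact Nat.cast_ne_zero.mpr h0
  clear hmdef hndef hi hj
  set D : ℂ := m ^ (a+1) * n ^ (b+1) * (m+n) ^ (a+b+1) with hDdef
  have hD : D ≠ 0 := by
    exact mul_ne_zero (mul_ne_zero (pow_ne_zero _ hm0) (pow_ne_zero _ hn0)) (pow_ne_zero _ hmn)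
  simp only [Nat.add_sub_cancel, show a + 1 + (b + 1) = a + b + 2 from by omega,
    show a + b + 2 - 1 = a + b + 1 from by omega]
  rw [Finset.sum_add_distrib]
  have hA : ∑ μ ∈ Finset.Icc 1 (a+b+1), ((Nat.choose (μ-1) a : ℂ) / (n ^ (a+b+2-μ) * (m+n) ^ μ))
      = (m^(a+1) * Sf n m b a) / D := by
    rw [← Finset.sum_subset (Finset.Icc_subset_Icc_left (by omega : 1 ≤ a+1))
        (fun μ hμ hμ' => by
          rw [Finset.mem_Icc] at hμ hμ'
          have : μ - 1 < a := by omega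
          rw [Nat.choose_eq_zero_of_lt this]
          simp)]
    rw [show Finset.Icc (a+1) (a+b+1) = Finset.Ico (a+1) (a+b+2) from by
          rw [← Finset.Ico_add_one_right_eq_Icc]; rfl,
      Finset.sum_Ico_eq_sum_range, show a+b+2-(a+1) = b+1 from by omega]
    rw [Sf, Finset.mul_sum, Finset.sum_div]
    refine Finset.sum_congr rfl fun k hk => ?_
    rw [Finset.mem_range] at hk
    obtain ⟨c, rfl⟩ : ∃ c, b = k + c := ⟨b - k, by omega⟩
    have hne : n ^ (a+(k+c)+2-(a+1+k)) * (m+n) ^ (a+1+k) ≠ 0 :=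
      mul_ne_zero (pow_ne_zero _ hn0) (pow_ne_zero _ hmn)
    rw [div_eq_div_iff hne hD, show a+1+k-1 = a+k from by omega,
        show a+(k+c)+2-(a+1+k) = c+1 from by omega, show k+c-k = c from by omega,
        show (a+k).choose a = (a+k).choose k from by
          rw [← Nat.choose_symm (Nat.le_add_left k a)]; simp,
        hDdef]
    ring
  have hB : ∑ μ ∈ Finset.Icc 1 (a+b+1), ((Nat.choose (μ-1) b : ℂ) / (m ^ (a+b+2-μ) * (m+n) ^ μ))
      = (n^(b+1) * Sf m n a b) / D := by
    rw [← Finset.sum_subset (Finset.Icc_subset_Icc_left (by omega : 1 ≤ b+1))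
        (fun μ hμ hμ' => by
          rw [Finset.mem_Icc] at hμ hμ'
          have : μ - 1 < b := by omega
          rw [Nat.choose_eq_zero_of_lt this]
          simp)]
    rw [show Finset.Icc (b+1) (a+b+1) = Finset.Ico (b+1) (b+a+2) from by
          rw [← Finset.Ico_add_one_right_eq_Icc]; congr 1; omega,
      Finset.sum_Ico_eq_sum_range, show b+a+2-(b+1) = a+1 from by omega]
    rw [Sf, Finset.mul_sum, Finset.sum_div]
    refine Finset.sum_congr rfl fun k hk => ?_
    rw [Finset.mem_range] at hk
    obtain ⟨c, rfl⟩ : ∃ c, a = k + c := ⟨a - k, by omega⟩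
    have hne : m ^ ((k+c)+b+2-(b+1+k)) * (m+n) ^ (b+1+k) ≠ 0 :=
      mul_ne_zero (pow_ne_zero _ hm0) (pow_ne_zero _ hmn)
    rw [div_eq_div_iff hne hD, show b+1+k-1 = b+k from by omega,
        show (k+c)+b+2-(b+1+k) = c+1 from by omega, show k+c-k = c from by omega,
        show (b+k).choose b = (b+k).choose k from by
          rw [← Nat.choose_symm (Nat.le_add_left k b)]; simp,
        hDdef]
    ring
  rw [hA, hB, ← add_div,
    div_eq_div_iff (mul_ne_zero (pow_ne_zero _ hm0) (pow_ne_zero _ hn0)) hD, hDdef]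
  have := main_poly m n a b
  linear_combination (m^(a+1) * n^(b+1)) * this
end

section
/- For an integer $k \geq 2$ and complex numbers $x, y$ with $|x| < 1$, $|y| < 1$, the identity $\sum_{j=1}^{k-1} \mathrm{Li}_{k-j}(x)\,\mathrm{Li}_j(y) = \sum_{\mu=1}^{k-1} 2^{\mu-1}\left( \mathrm{Li}_{k-\mu,\mu}(x^{-1}y, x) + \mathrm{Li}_{k-\mu,\mu}(xy^{-1}, y) \right)$ holds, where for the right-hand side we assume additionally $x \neq 0$ and $y \neq 0$. -/
open scoped BigOperators

/-- The polylogarithm `Li_k(z) = ∑_{m ≥ 1} z^m / m^k`. -/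
noncomputable def Li (k : ℕ) (z : ℂ) : ℂ :=
  ∑' m : ℕ, z ^ (m + 1) / ((m + 1 : ℕ) : ℂ) ^ k

/-- The double polylogarithm `Li_{k₁,k₂}(z₁,z₂) = ∑_{0 < m₁ < m₂} z₁^{m₁} z₂^{m₂} / (m₁^{k₁} m₂^{k₂})`,
parametrized by `m₁ = p.1 + 1`, `m₂ = p.1 + p.2 + 2`. -/
noncomputable def Li₂ (k₁ k₂ : ℕ) (z₁ z₂ : ℂ) : ℂ :=
  ∑' p : ℕ × ℕ, z₁ ^ (p.1 + 1) * z₂ ^ (p.1 + p.2 + 2) /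
    (((p.1 + 1) ^ k₁ * (p.1 + p.2 + 2) ^ k₂ : ℕ) : ℂ)

lemma key_range (a b : ℂ) (ha : a ≠ 0) (hb : b ≠ 0) (hs : a + b ≠ 0) :
    ∀ K : ℕ,
    ∑ i ∈ Finset.range (K+1), 1 / (a ^ (K+1-i) * b ^ (i+1))
      = ∑ i ∈ Finset.range (K+1), 2 ^ i *
          (1 / (b ^ (K+1-i) * (a+b) ^ (i+1)) + 1 / (a ^ (K+1-i) * (a+b) ^ (i+1))) := by
  intro K
  induction K with
  | zero => simp; field_simp
  | succ K ih =>
    have hL : (a+b) * ∑ i ∈ Finset.range (K+2), 1 / (a ^ (K+2-i) * b ^ (i+1))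
        = 2 * (∑ i ∈ Finset.range (K+1), 1 / (a ^ (K+1-i) * b ^ (i+1)))
          + 1 / a ^ (K+2) + 1 / b ^ (K+2) := by
      rw [Finset.mul_sum]
      have step : ∀ i ∈ Finset.range (K+2),
          (a+b) * (1 / (a ^ (K+2-i) * b ^ (i+1)))
          = 1 / (a ^ (K+1-i) * b ^ (i+1)) + 1 / (a ^ (K+2-i) * b ^ i) := by
        intro i hi
        simp only [Finset.mem_range] at hi
        have h1 : a ^ (K+2-i) = a * a ^ (K+1-i) := by
          rw [← pow_succ']; congr 1; omega
        have h2 : b ^ (i+1) = b * b ^ i := by rw [pow_succ']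
        rw [h1, h2]
        have hpa : a ^ (K+1-i) ≠ 0 := pow_ne_zero _ ha
        have hpb : b ^ i ≠ 0 := pow_ne_zero _ hb
        field_simp
      rw [Finset.sum_congr rfl step, Finset.sum_add_distrib]
      rw [Finset.sum_range_succ (fun i => 1 / (a ^ (K+1-i) * b ^ (i+1)))]
      rw [Finset.sum_range_succ' (fun i => 1 / (a ^ (K+2-i) * b ^ i))]
      have e1 : ∀ i ∈ Finset.range (K+1),
          1 / (a ^ (K+2-(i+1)) * b ^ (i+1)) = 1 / (a ^ (K+1-i) * b ^ (i+1)) := by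
        intro i hi; congr 3; omega
      rw [Finset.sum_congr rfl e1]
      simp
      ring
    have hR : (a+b) * ∑ i ∈ Finset.range (K+2), 2 ^ i *
          (1 / (b ^ (K+2-i) * (a+b) ^ (i+1)) + 1 / (a ^ (K+2-i) * (a+b) ^ (i+1)))
        = 2 * (∑ i ∈ Finset.range (K+1), 2 ^ i *
          (1 / (b ^ (K+1-i) * (a+b) ^ (i+1)) + 1 / (a ^ (K+1-i) * (a+b) ^ (i+1))))
          + 1 / a ^ (K+2) + 1 / b ^ (K+2) := by
      rw [Finset.mul_sum]
      rw [Finset.sum_range_succ' (fun i => (a+b) * ((2:ℂ) ^ i *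
          (1 / (b ^ (K+2-i) * (a+b) ^ (i+1)) + 1 / (a ^ (K+2-i) * (a+b) ^ (i+1)))))]
      have e2 : ∀ i ∈ Finset.range (K+1),
          (a+b) * ((2:ℂ) ^ (i+1) *
            (1 / (b ^ (K+2-(i+1)) * (a+b) ^ (i+1+1)) + 1 / (a ^ (K+2-(i+1)) * (a+b) ^ (i+1+1))))
          = 2 * ((2:ℂ) ^ i *
            (1 / (b ^ (K+1-i) * (a+b) ^ (i+1)) + 1 / (a ^ (K+1-i) * (a+b) ^ (i+1)))) := by
        intro i hi
        have h3 : (K+2-(i+1)) = K+1-i := by omega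
        rw [h3]
        have h4 : (a+b) ^ (i+1+1) = (a+b) * (a+b) ^ (i+1) := by rw [pow_succ']
        rw [h4]
        have hpa : a ^ (K+1-i) ≠ 0 := pow_ne_zero _ ha
        have hpb : b ^ (K+1-i) ≠ 0 := pow_ne_zero _ hb
        have hps : (a+b) ^ (i+1) ≠ 0 := pow_ne_zero _ hs
        field_simp
        ring
      rw [Finset.sum_congr rfl e2, ← Finset.mul_sum]
      have h5 : (a+b) * ((2:ℂ) ^ 0 *
          (1 / (b ^ (K+2-0) * (a+b) ^ (0+1)) + 1 / (a ^ (K+2-0) * (a+b) ^ (0+1))))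
          = 1 / a ^ (K+2) + 1 / b ^ (K+2) := by
        have hpa : a ^ (K+2) ≠ 0 := pow_ne_zero _ ha
        have hpb : b ^ (K+2) ≠ 0 := pow_ne_zero _ hb
        simp only [pow_zero, one_mul, Nat.sub_zero, pow_one]
        field_simp
        ring
      rw [h5]
      ring
    apply mul_left_cancel₀ hs
    show (a+b) * ∑ i ∈ Finset.range (K+2), 1 / (a ^ (K+2-i) * b ^ (i+1))
      = (a+b) * ∑ i ∈ Finset.range (K+2), 2 ^ i *
          (1 / (b ^ (K+2-i) * (a+b) ^ (i+1)) + 1 / (a ^ (K+2-i) * (a+b) ^ (i+1)))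
    rw [hL, hR, ih]

lemma key_Icc (a b : ℂ) (ha : a ≠ 0) (hb : b ≠ 0) (hs : a + b ≠ 0)
    {k : ℕ} (hk : 2 ≤ k) :
    ∑ j ∈ Finset.Icc 1 (k-1), 1 / (a ^ (k-j) * b ^ j)
      = ∑ μ ∈ Finset.Icc 1 (k-1), 2 ^ (μ-1) *
          (1 / (b ^ (k-μ) * (a+b) ^ μ) + 1 / (a ^ (k-μ) * (a+b) ^ μ)) := by
  obtain ⟨K, rfl⟩ : ∃ K, k = K + 2 := ⟨k - 2, by omega⟩
  rw [show K + 2 - 1 = K + 1 from rfl]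
  rw [← Finset.Ico_add_one_right_eq_Icc, Finset.sum_Ico_eq_sum_range, Finset.sum_Ico_eq_sum_range]
  rw [show K + 1 + 1 - 1 = K + 1 from rfl]
  have hLe : ∀ i ∈ Finset.range (K+1),
      1 / (a ^ (K+2-(1+i)) * b ^ (1+i)) = 1 / (a ^ (K+1-i) * b ^ (i+1)) := by
    intro i hi
    rw [show K+2-(1+i) = K+1-i from by omega, add_comm 1 i]
  have hRe : ∀ i ∈ Finset.range (K+1),
      (2:ℂ) ^ (1+i-1) * (1 / (b ^ (K+2-(1+i)) * (a+b) ^ (1+i))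
          + 1 / (a ^ (K+2-(1+i)) * (a+b) ^ (1+i)))
      = 2 ^ i * (1 / (b ^ (K+1-i) * (a+b) ^ (i+1)) + 1 / (a ^ (K+1-i) * (a+b) ^ (i+1))) := by
    intro i hi
    rw [show 1+i-1 = i from by omega, show K+2-(1+i) = K+1-i from by omega, add_comm 1 i]
  rw [Finset.sum_congr rfl hLe, Finset.sum_congr rfl hRe]
  exact key_range a b ha hb hs K

lemma summable_geom_pow (z : ℂ) (hz : ‖z‖ < 1) : Summable (fun m : ℕ => ‖z‖ ^ (m+1)) := by
  simpa [pow_succ'] using (summable_geometric_of_lt_one (norm_nonneg z) hz).mul_left ‖z‖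

lemma one_le_cast_pow (N n : ℕ) (hN : 1 ≤ N) : (1:ℝ) ≤ (N:ℝ) ^ n := by
  apply one_le_pow₀
  exact_mod_cast hN

lemma norm_pow_div_cast_le (z : ℂ) (e N n : ℕ) (hN : 1 ≤ N) :
    ‖z ^ e / ((N:ℕ):ℂ) ^ n‖ ≤ ‖z‖ ^ e := by
  rw [norm_div, norm_pow, norm_pow, Complex.norm_natCast]
  exact div_le_self (pow_nonneg (norm_nonneg z) e) (one_le_cast_pow N n hN)

lemma summable_prod_geom (u v : ℂ) (hu : ‖u‖ < 1) (hv : ‖v‖ < 1) :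
    Summable (fun p : ℕ × ℕ => ‖u‖ ^ (p.1+1) * ‖v‖ ^ (p.2+1)) :=
  Summable.mul_of_nonneg (f := fun m : ℕ => ‖u‖ ^ (m+1)) (g := fun n : ℕ => ‖v‖ ^ (n+1))
    (summable_geom_pow u hu) (summable_geom_pow v hv)
    (fun _ => pow_nonneg (norm_nonneg _) _) (fun _ => pow_nonneg (norm_nonneg _) _)

lemma summable_of_bound {x y : ℂ} (hx : ‖x‖ < 1) (hy : ‖y‖ < 1) (f : ℕ × ℕ → ℂ)
    (hf : ∀ p : ℕ × ℕ, ‖f p‖ ≤ ‖x‖ ^ (p.1+1) * ‖y‖ ^ (p.2+1)) : Summable f :=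
  Summable.of_norm_bounded (summable_prod_geom x y hx hy) hf

lemma summable_Li_norm (z : ℂ) (hz : ‖z‖ < 1) (n : ℕ) :
    Summable (fun m : ℕ => ‖z ^ (m+1) / ((m+1 : ℕ) : ℂ) ^ n‖) := by
  apply Summable.of_nonneg_of_le (fun m => norm_nonneg _)
    (fun m => norm_pow_div_cast_le z (m+1) (m+1) n (Nat.le_add_left 1 m))
    (summable_geom_pow z hz)

lemma Li2_first (c d : ℕ) (x y : ℂ) (hx0 : x ≠ 0) :
    Li₂ c d (x⁻¹ * y) x = ∑' p : ℕ × ℕ, x ^ (p.1+1) * y ^ (p.2+1) /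
      (((p.2+1) ^ c * (p.1+p.2+2) ^ d : ℕ) : ℂ) := by
  rw [Li₂]
  have h : ∀ p : ℕ × ℕ,
      (x⁻¹*y) ^ (p.1+1) * x ^ (p.1+p.2+2) / (((p.1+1) ^ c * (p.1+p.2+2) ^ d : ℕ) : ℂ)
      = (fun q : ℕ × ℕ => x ^ (q.1+1) * y ^ (q.2+1) /
          (((q.2+1) ^ c * (q.1+q.2+2) ^ d : ℕ) : ℂ)) ((Equiv.prodComm ℕ ℕ) p) := by
    intro p
    show (x⁻¹*y) ^ (p.1+1) * x ^ (p.1+p.2+2) / (((p.1+1) ^ c * (p.1+p.2+2) ^ d : ℕ) : ℂ)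
      = x ^ (p.2+1) * y ^ (p.1+1) / (((p.1+1) ^ c * (p.2+p.1+2) ^ d : ℕ) : ℂ)
    rw [Nat.add_comm p.2 p.1]
    congr 1
    rw [mul_pow, show p.1+p.2+2 = (p.1+1)+(p.2+1) from by ring, pow_add, inv_pow]
    have : x ^ (p.1+1) ≠ 0 := pow_ne_zero _ hx0
    field_simp
    ring
  exact (tsum_congr h).trans (Equiv.tsum_eq (Equiv.prodComm ℕ ℕ)
    (fun q : ℕ × ℕ => x ^ (q.1+1) * y ^ (q.2+1) / (((q.2+1) ^ c * (q.1+q.2+2) ^ d : ℕ) : ℂ)))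

lemma Li2_second (c d : ℕ) (x y : ℂ) (hy0 : y ≠ 0) :
    Li₂ c d (x * y⁻¹) y = ∑' p : ℕ × ℕ, x ^ (p.1+1) * y ^ (p.2+1) /
      (((p.1+1) ^ c * (p.1+p.2+2) ^ d : ℕ) : ℂ) := by
  rw [Li₂]
  apply tsum_congr
  intro p
  congr 1
  rw [mul_pow, show p.1+p.2+2 = (p.1+1)+(p.2+1) from by ring, pow_add, inv_pow]
  have : y ^ (p.1+1) ≠ 0 := pow_ne_zero _ hy0
  field_simp
  ring

theorem double_shuffle_weighted (k : ℕ) (hk : 2 ≤ k) (x y : ℂ)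
    (hx : ‖x‖ < 1) (hy : ‖y‖ < 1) (hx0 : x ≠ 0) (hy0 : y ≠ 0) :
    ∑ j ∈ Finset.Icc 1 (k - 1), Li (k - j) x * Li j y =
      ∑ μ ∈ Finset.Icc 1 (k - 1), (2 : ℂ) ^ (μ - 1) *
        (Li₂ (k - μ) μ (x⁻¹ * y) x + Li₂ (k - μ) μ (x * y⁻¹) y) := by
  -- the three families of terms
  set fL : ℕ → ℕ × ℕ → ℂ := fun j p =>
    x ^ (p.1+1) / ((p.1+1 : ℕ) : ℂ) ^ (k-j) * (y ^ (p.2+1) / ((p.2+1 : ℕ) : ℂ) ^ j) with hfL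
  set g1 : ℕ → ℕ × ℕ → ℂ := fun μ p =>
    x ^ (p.1+1) * y ^ (p.2+1) / (((p.2+1) ^ (k-μ) * (p.1+p.2+2) ^ μ : ℕ) : ℂ) with hg1
  set g2 : ℕ → ℕ × ℕ → ℂ := fun μ p =>
    x ^ (p.1+1) * y ^ (p.2+1) / (((p.1+1) ^ (k-μ) * (p.1+p.2+2) ^ μ : ℕ) : ℂ) with hg2
  have hxy_bound : ∀ (N : ℕ), 1 ≤ N → ∀ p : ℕ × ℕ,
      ‖x ^ (p.1+1) * y ^ (p.2+1) / ((N:ℕ):ℂ)‖ ≤ ‖x‖ ^ (p.1+1) * ‖y‖ ^ (p.2+1) := by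
    intro N hN p
    rw [norm_div, norm_mul, norm_pow, norm_pow, Complex.norm_natCast]
    apply div_le_self (mul_nonneg (pow_nonneg (norm_nonneg _) _) (pow_nonneg (norm_nonneg _) _))
    exact_mod_cast hN
  have hsum_fL : ∀ j, Summable (fL j) := by
    intro j
    apply summable_of_bound hx hy
    intro p
    rw [hfL]
    simp only
    rw [norm_mul]
    exact mul_le_mul (norm_pow_div_cast_le x (p.1+1) (p.1+1) (k-j) (Nat.le_add_left 1 p.1))
      (norm_pow_div_cast_le y (p.2+1) (p.2+1) j (Nat.le_add_left 1 p.2))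
      (norm_nonneg _) (pow_nonneg (norm_nonneg _) _)
  have hNpos : ∀ (m n c d : ℕ), 1 ≤ (m+1) ^ c * (m+n+2) ^ d := by
    intro m n c d
    exact Nat.one_le_iff_ne_zero.mpr (Nat.mul_ne_zero (pow_ne_zero _ (Nat.succ_ne_zero m))
      (pow_ne_zero _ (by omega)))
  have hsum_g1 : ∀ μ, Summable (g1 μ) := by
    intro μ
    apply summable_of_bound hx hy
    intro p
    exact hxy_bound _ (hNpos p.2 p.1 (k-μ) μ |>.trans_eq (by ring_nf)) p
  have hsum_g2 : ∀ μ, Summable (g2 μ) := by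
    intro μ
    apply summable_of_bound hx hy
    intro p
    exact hxy_bound _ (hNpos p.1 p.2 (k-μ) μ) p
  -- LHS as a single tsum
  have hLeft : ∑ j ∈ Finset.Icc 1 (k-1), Li (k-j) x * Li j y
      = ∑' p : ℕ × ℕ, ∑ j ∈ Finset.Icc 1 (k-1), fL j p := by
    rw [Summable.tsum_finsetSum (fun j _ => hsum_fL j)]
    apply Finset.sum_congr rfl
    intro j _
    rw [Li, Li]
    exact tsum_mul_tsum_of_summable_norm (summable_Li_norm x hx _) (summable_Li_norm y hy _)
  -- RHS as a single tsum
  have hRight : ∑ μ ∈ Finset.Icc 1 (k-1), (2 : ℂ) ^ (μ-1) *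
        (Li₂ (k-μ) μ (x⁻¹ * y) x + Li₂ (k-μ) μ (x * y⁻¹) y)
      = ∑' p : ℕ × ℕ, ∑ μ ∈ Finset.Icc 1 (k-1), (2:ℂ) ^ (μ-1) * (g1 μ p + g2 μ p) := by
    rw [Summable.tsum_finsetSum (fun μ _ => ((hsum_g1 μ).add (hsum_g2 μ)).mul_left _)]
    apply Finset.sum_congr rfl
    intro μ _
    rw [Li2_first (k-μ) μ x y hx0, Li2_second (k-μ) μ x y hy0]
    rw [tsum_mul_left, Summable.tsum_add (hsum_g1 μ) (hsum_g2 μ)]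
  rw [hLeft, hRight]
  apply tsum_congr
  intro p
  have ha : ((p.1+1 : ℕ) : ℂ) ≠ 0 := Nat.cast_ne_zero.mpr (Nat.succ_ne_zero _)
  have hb : ((p.2+1 : ℕ) : ℂ) ≠ 0 := Nat.cast_ne_zero.mpr (Nat.succ_ne_zero _)
  have hab : ((p.1+1 : ℕ) : ℂ) + ((p.2+1 : ℕ) : ℂ) ≠ 0 := by
    have : ((p.1+1 : ℕ) : ℂ) + ((p.2+1 : ℕ) : ℂ) = ((p.1+p.2+2 : ℕ) : ℂ) := by
      push_cast; ring
    rw [this]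
    exact Nat.cast_ne_zero.mpr (by omega)
  calc ∑ j ∈ Finset.Icc 1 (k-1), fL j p
      = (x ^ (p.1+1) * y ^ (p.2+1)) * ∑ j ∈ Finset.Icc 1 (k-1),
          1 / (((p.1+1 : ℕ) : ℂ) ^ (k-j) * ((p.2+1 : ℕ) : ℂ) ^ j) := by
        rw [Finset.mul_sum]
        apply Finset.sum_congr rfl
        intro j _
        rw [hfL]
        simp only
        rw [mul_one_div, div_mul_div_comm]
    _ = (x ^ (p.1+1) * y ^ (p.2+1)) * ∑ μ ∈ Finset.Icc 1 (k-1), 2 ^ (μ-1) *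
          (1 / (((p.2+1 : ℕ) : ℂ) ^ (k-μ) * (((p.1+1 : ℕ) : ℂ) + ((p.2+1 : ℕ) : ℂ)) ^ μ)
            + 1 / (((p.1+1 : ℕ) : ℂ) ^ (k-μ) * (((p.1+1 : ℕ) : ℂ) + ((p.2+1 : ℕ) : ℂ)) ^ μ)) := by
        rw [key_Icc _ _ ha hb hab hk]
    _ = ∑ μ ∈ Finset.Icc 1 (k-1), (2:ℂ) ^ (μ-1) * (g1 μ p + g2 μ p) := by
        rw [Finset.mul_sum]
        apply Finset.sum_congr rfl
        intro μ _
        rw [hg1, hg2]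
        simp only
        have hc1 : (((p.2+1) ^ (k-μ) * (p.1+p.2+2) ^ μ : ℕ) : ℂ)
            = ((p.2+1 : ℕ) : ℂ) ^ (k-μ) * (((p.1+1 : ℕ) : ℂ) + ((p.2+1 : ℕ) : ℂ)) ^ μ := by
          push_cast; ring
        have hc2 : (((p.1+1) ^ (k-μ) * (p.1+p.2+2) ^ μ : ℕ) : ℂ)
            = ((p.1+1 : ℕ) : ℂ) ^ (k-μ) * (((p.1+1 : ℕ) : ℂ) + ((p.2+1 : ℕ) : ℂ)) ^ μ := by
          push_cast; ring
        rw [hc1, hc2]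
        ring
end

section
/- For an integer $k \geq 2$ and complex numbers $x, y$ with $|x| < 1$, $|y| < 1$, $x, y \neq 0$, the identity $\mathrm{Li}_{k-1}(xy)\,\mathrm{Li}_1(y) = \mathrm{Li}_{1,k-1}(x^{-1}, xy) + \sum_{j=1}^{k-1} \mathrm{Li}_{k-j,j}(x, y)$ holds. -/
open scoped BigOperators

set_option maxHeartbeats 1000000

private lemma telescope (A B : ℂ) (hA : A ≠ 0) (hB : B ≠ 0) :
    ∀ N : ℕ, (B - A) * ∑ i ∈ Finset.range N, (A ^ (N - i) * B ^ (i + 1))⁻¹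
      = (A ^ N)⁻¹ - (B ^ N)⁻¹ := by
  intro N
  induction N with
  | zero => simp
  | succ N ih =>
    rw [Finset.sum_range_succ]
    have h1 : ∑ i ∈ Finset.range N, (A ^ (N + 1 - i) * B ^ (i + 1))⁻¹
        = A⁻¹ * ∑ i ∈ Finset.range N, (A ^ (N - i) * B ^ (i + 1))⁻¹ := by
      rw [Finset.mul_sum]
      refine Finset.sum_congr rfl fun i hi => ?_
      have hi' := Finset.mem_range.mp hi
      have : N + 1 - i = (N - i) + 1 := by omega
      rw [this, pow_succ]
      field_simp
    rw [h1]
    have hAN : (A : ℂ) ^ N ≠ 0 := pow_ne_zero _ hA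
    have hBN : (B : ℂ) ^ N ≠ 0 := pow_ne_zero _ hB
    have h2 : (B - A) * (A⁻¹ * ∑ i ∈ Finset.range N, (A ^ (N - i) * B ^ (i + 1))⁻¹)
        = A⁻¹ * ((A ^ N)⁻¹ - (B ^ N)⁻¹) := by
      rw [← ih]; ring
    have h3 : N + 1 - N = 1 := by omega
    rw [mul_add, h2, h3, pow_one, pow_succ, pow_succ]
    field_simp
    ring

private lemma geo_succ {r : ℝ} (h0 : 0 ≤ r) (h1 : r < 1) :
    Summable (fun m : ℕ => r ^ (m + 1)) := by
  simpa only [pow_succ] using (summable_geometric_of_lt_one h0 h1).mul_right r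

private lemma sumgeo2 {r s : ℝ} (hr0 : 0 ≤ r) (hr : r < 1) (hs0 : 0 ≤ s) (hs : s < 1) :
    Summable (fun p : ℕ × ℕ => r ^ (p.1 + 1) * s ^ (p.2 + 1)) := by
  exact Summable.mul_of_nonneg (f := fun m : ℕ => r ^ (m + 1)) (g := fun m : ℕ => s ^ (m + 1))
    (geo_succ hr0 hr) (geo_succ hs0 hs)
    (fun _ => pow_nonneg hr0 _) (fun _ => pow_nonneg hs0 _)

private lemma summable_norm_one (z : ℂ) (hz : ‖z‖ < 1) (j : ℕ) :
    Summable (fun m : ℕ => ‖z ^ (m + 1) / ((m + 1 : ℕ) : ℂ) ^ j‖) := by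
  refine Summable.of_nonneg_of_le (fun _ => norm_nonneg _) (fun m => ?_)
    (geo_succ (norm_nonneg z) hz)
  rw [norm_div, norm_pow, norm_pow, Complex.norm_natCast]
  refine div_le_self (by positivity) ?_
  refine one_le_pow₀ ?_
  exact_mod_cast Nat.succ_le_succ (Nat.zero_le m)

theorem shuffle_type_identity (k : ℕ) (hk : 2 ≤ k) (x y : ℂ)
    (hx : ‖x‖ < 1) (hy : ‖y‖ < 1) (hx0 : x ≠ 0) (hy0 : y ≠ 0) :
    Li (k - 1) (x * y) * Li 1 y =
      Li₂ 1 (k - 1) x⁻¹ (x * y) + ∑ j ∈ Finset.Icc 1 (k - 1), Li₂ (k - j) j x y := by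
  obtain ⟨N, rfl⟩ : ∃ N, k = N + 1 := ⟨k - 1, by omega⟩
  simp only [Nat.add_sub_cancel]
  have hX0 : (0:ℝ) ≤ ‖x‖ := norm_nonneg x
  have hY0 : (0:ℝ) ≤ ‖y‖ := norm_nonneg y
  have hXY : ‖x * y‖ < 1 := by
    rw [norm_mul]
    nlinarith
  have hXne : ‖x‖ ≠ 0 := norm_ne_zero_iff.mpr hx0
  -- the three families of terms
  set F : ℕ × ℕ → ℂ := fun p =>
    ((x * y) ^ (p.1 + 1) / ((p.1 + 1 : ℕ) : ℂ) ^ N) * (y ^ (p.2 + 1) / ((p.2 + 1 : ℕ) : ℂ) ^ 1)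
    with hFdef
  set G : ℕ × ℕ → ℂ := fun p =>
    x⁻¹ ^ (p.1 + 1) * (x * y) ^ (p.1 + p.2 + 2) /
      (((p.1 + 1) ^ 1 * (p.1 + p.2 + 2) ^ N : ℕ) : ℂ) with hGdef
  set H : ℕ → ℕ × ℕ → ℂ := fun i p =>
    x ^ (p.1 + 1) * y ^ (p.1 + p.2 + 2) /
      (((p.1 + 1) ^ (N - i) * (p.1 + p.2 + 2) ^ (i + 1) : ℕ) : ℂ) with hHdef
  -- norm computations and summability
  have expsplit : ∀ p : ℕ × ℕ, ‖x‖ ^ (p.1 + 1) * ‖y‖ ^ (p.1 + p.2 + 2)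
      = (‖x‖ * ‖y‖) ^ (p.1 + 1) * ‖y‖ ^ (p.2 + 1) := by
    intro p
    rw [show p.1 + p.2 + 2 = (p.1 + 1) + (p.2 + 1) by ring, pow_add, mul_pow]
    ring
  have hden : ∀ a b : ℕ, (1:ℝ) ≤ (((a + 1) ^ b : ℕ) : ℝ) := by
    intro a b
    exact_mod_cast Nat.one_le_iff_ne_zero.mpr (pow_ne_zero _ (Nat.succ_ne_zero a))
  have hdenmul : ∀ a b c d : ℕ,
      (1:ℝ) ≤ ((((a + 1) ^ b) * ((c + 1) ^ d) : ℕ) : ℝ) := by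
    intro a b c d
    have := Nat.one_le_iff_ne_zero.mpr
      (mul_ne_zero (pow_ne_zero b (Nat.succ_ne_zero a)) (pow_ne_zero d (Nat.succ_ne_zero c)))
    exact_mod_cast this
  have hSG : Summable G := by
    refine Summable.of_norm_bounded
      (sumgeo2 hY0 hy (by positivity) (by nlinarith) :
        Summable fun p : ℕ × ℕ => ‖y‖ ^ (p.1 + 1) * (‖x‖ * ‖y‖) ^ (p.2 + 1)) (fun p => ?_)
    rw [hGdef]
    simp only
    rw [norm_div, norm_mul, norm_pow, norm_pow, norm_mul, norm_inv, Complex.norm_natCast]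
    have hnum : ‖x‖⁻¹ ^ (p.1 + 1) * (‖x‖ * ‖y‖) ^ (p.1 + p.2 + 2)
        = ‖y‖ ^ (p.1 + 1) * (‖x‖ * ‖y‖) ^ (p.2 + 1) := by
      have hxx : ‖x‖⁻¹ ^ (p.1 + 1) * ‖x‖ ^ (p.1 + 1) = 1 := by
        rw [← mul_pow, inv_mul_cancel₀ hXne, one_pow]
      rw [show p.1 + p.2 + 2 = (p.1 + 1) + (p.2 + 1) by ring,
        pow_add (‖x‖ * ‖y‖) (p.1 + 1) (p.2 + 1), mul_pow ‖x‖ ‖y‖ (p.1 + 1)]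
      linear_combination (‖y‖ ^ (p.1 + 1) * (‖x‖ * ‖y‖) ^ (p.2 + 1)) * hxx
    rw [hnum]
    refine div_le_self (by positivity) ?_
    have : (p.1 + p.2 + 2) = (p.1 + p.2 + 1) + 1 := by ring
    rw [this]
    have := hdenmul p.1 1 (p.1 + p.2 + 1) N
    simpa [pow_one] using this
  have hSH : ∀ i : ℕ, Summable (H i) := by
    intro i
    refine Summable.of_norm_bounded
      (sumgeo2 (by positivity) (by nlinarith) hY0 hy :
        Summable fun p : ℕ × ℕ => (‖x‖ * ‖y‖) ^ (p.1 + 1) * ‖y‖ ^ (p.2 + 1)) (fun p => ?_)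
    rw [hHdef]
    simp only
    rw [norm_div, norm_mul, norm_pow, norm_pow, Complex.norm_natCast, ← expsplit]
    refine div_le_self (by positivity) ?_
    have : (p.1 + p.2 + 2) = (p.1 + p.2 + 1) + 1 := by ring
    rw [this]
    exact hdenmul p.1 (N - i) (p.1 + p.2 + 1) (i + 1)
  -- Step A : expand the product as a double sum
  have stepA : Li N (x * y) * Li 1 y = ∑' p : ℕ × ℕ, F p := by
    rw [Li, Li, hFdef]
    exact tsum_mul_tsum_of_summable_norm (summable_norm_one _ hXY N) (summable_norm_one _ hy 1)
  -- Step B : reindex the first double polylog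
  have stepB : Li₂ 1 N x⁻¹ (x * y) = ∑' p : ℕ × ℕ, G (p.2, p.1) := by
    rw [Li₂]
    exact ((Equiv.prodComm ℕ ℕ).tsum_eq G).symm
  -- Step C : rewrite the finite sum of double polylogs
  have stepC : ∑ j ∈ Finset.Icc 1 N, Li₂ (N + 1 - j) j x y
      = ∑' p : ℕ × ℕ, ∑ i ∈ Finset.range N, H i p := by
    rw [show Finset.Icc 1 N = Finset.Ico 1 (N + 1) by rfl, Finset.sum_Ico_eq_sum_range]
    simp only [Nat.add_sub_cancel]
    rw [Summable.tsum_finsetSum (fun i _ => hSH i)]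
    refine Finset.sum_congr rfl fun i hi => ?_
    have h1 : N + 1 - (1 + i) = N - i := by omega
    have h2 : 1 + i = i + 1 := Nat.add_comm 1 i
    rw [h1, h2, Li₂, hHdef]
  have hSG' : Summable (fun p : ℕ × ℕ => G (p.2, p.1)) :=
    (Equiv.prodComm ℕ ℕ).summable_iff.mpr hSG
  have hSHsum : Summable (fun p : ℕ × ℕ => ∑ i ∈ Finset.range N, H i p) :=
    summable_sum (fun i _ => hSH i)
  rw [stepA, stepB, stepC, ← Summable.tsum_add hSG' hSHsum]
  refine tsum_congr fun p => ?_
  -- pointwise identity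
  obtain ⟨m, n⟩ := p
  simp only [hFdef, hGdef, hHdef]
  set A : ℂ := ((m + 1 : ℕ) : ℂ) with hA
  set B : ℂ := ((m + n + 2 : ℕ) : ℂ) with hB
  set C : ℂ := ((n + 1 : ℕ) : ℂ) with hC
  have hAne : A ≠ 0 := Nat.cast_ne_zero.mpr (Nat.succ_ne_zero m)
  have hBne : B ≠ 0 := Nat.cast_ne_zero.mpr (by omega)
  have hCne : C ≠ 0 := Nat.cast_ne_zero.mpr (Nat.succ_ne_zero n)
  have hBAC : B = A + C := by rw [hA, hB, hC]; push_cast; ring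
  have hxpow : x⁻¹ ^ (n + 1) * (x * y) ^ (m + n + 2)
      = x ^ (m + 1) * y ^ (m + n + 2) := by
    have hxx : x⁻¹ ^ (n + 1) * x ^ (n + 1) = 1 := by
      rw [← mul_pow, inv_mul_cancel₀ hx0, one_pow]
    have hxsplit : x ^ (m + n + 2) = x ^ (n + 1) * x ^ (m + 1) := by
      rw [← pow_add]; congr 1; omega
    rw [mul_pow, hxsplit]
    linear_combination (x ^ (m + 1) * y ^ (m + n + 2)) * hxx
  have hcast1 : (((n + 1) ^ 1 * (n + m + 2) ^ N : ℕ) : ℂ) = C * B ^ N := by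
    push_cast
    rw [hB, hC]
    push_cast
    have : (n : ℂ) + (m:ℂ) + 2 = (m:ℂ) + (n:ℂ) + 2 := by ring
    rw [this, pow_one]
  have hcast2 : ∀ i, (((m + 1) ^ (N - i) * (m + n + 2) ^ (i + 1) : ℕ) : ℂ)
      = A ^ (N - i) * B ^ (i + 1) := by
    intro i
    push_cast [hA, hB]
    ring
  -- LHS simplification
  have lhs_eq : (x * y) ^ (m + 1) / A ^ N * (y ^ (n + 1) / C ^ 1)
      = x ^ (m + 1) * y ^ (m + n + 2) * (A ^ N * C)⁻¹ := by
    rw [pow_one, mul_pow, show m + n + 2 = (m + 1) + (n + 1) by ring, pow_add]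
    field_simp
    ring
  have key := telescope A B hAne hBne N
  -- turn into the required identity
  have hANe : A ^ N ≠ 0 := pow_ne_zero _ hAne
  have hBNe : B ^ N ≠ 0 := pow_ne_zero _ hBne
  have main : (A ^ N * C)⁻¹ = (C * B ^ N)⁻¹
      + ∑ i ∈ Finset.range N, (A ^ (N - i) * B ^ (i + 1))⁻¹ := by
    have hsum : ∑ i ∈ Finset.range N, (A ^ (N - i) * B ^ (i + 1))⁻¹
        = ((A ^ N)⁻¹ - (B ^ N)⁻¹) / C := by
      rw [← key]
      have : B - A = C := by rw [hBAC]; ring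
      rw [this]
      field_simp
    rw [hsum]
    field_simp
    ring
  calc (x * y) ^ (m + 1) / A ^ N * (y ^ (n + 1) / C ^ 1)
      = x ^ (m + 1) * y ^ (m + n + 2) * (A ^ N * C)⁻¹ := lhs_eq
    _ = x ^ (m + 1) * y ^ (m + n + 2) * ((C * B ^ N)⁻¹
        + ∑ i ∈ Finset.range N, (A ^ (N - i) * B ^ (i + 1))⁻¹) := by rw [main]
    _ = x⁻¹ ^ (n + 1) * (x * y) ^ (n + m + 2) / (((n + 1) ^ 1 * (n + m + 2) ^ N : ℕ) : ℂ)
        + ∑ i ∈ Finset.range N, x ^ (m + 1) * y ^ (m + n + 2) /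
            (((m + 1) ^ (N - i) * (m + n + 2) ^ (i + 1) : ℕ) : ℂ) := by
      rw [mul_add, Finset.mul_sum, hcast1]
      congr 1
      · rw [show n + m + 2 = m + n + 2 by ring, hxpow]
        rw [div_eq_mul_inv]
      · refine Finset.sum_congr rfl fun i _ => ?_
        rw [hcast2 i, div_eq_mul_inv]
end

section
/- Let $k_1, \ldots, k_r \geq 1$ and let $y$ be a fixed complex number with $|y| \leq 1$. Then for $x$ in the open unit disc, $\frac{\partial}{\partial x} \mathcal{L}_{k_1,\ldots,k_r}(x,y) = \frac{1}{x} \mathcal{L}_{k_1,\ldots,k_r - 1}(x,y)$ if $k_r > 1$, and $\frac{\partial}{\partial x} \mathcal{L}_{k_1,\ldots,k_{r-1},1}(x,y) = \frac{1-y}{(1-x)(1-xy)} \mathcal{L}_{k_1,\ldots,k_{r-1}}(x,y)$ (with $\mathcal{L}_{\emptyset}(x,y) = 1$ when $r = 1$). -/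
open scoped BigOperators

/-- The two-variable multiple polylogarithm
`𝓛_{k₁,…,k_r}(x,y) = ∑_{n₁,…,n_r ≥ 1} ∏_j x^{n_j}(1-y^{n_j}) / ∏_j (n₁+⋯+n_j)^{k_j}`. -/
noncomputable def LL {r : ℕ} (k : Fin r → ℕ) (x y : ℂ) : ℂ :=
  ∑' n : Fin r → ℕ+, (∏ j, x ^ (n j : ℕ) * (1 - y ^ (n j : ℕ))) /
    ∏ j, (((∑ ν ∈ Finset.Iic j, (n ν : ℕ)) : ℕ) : ℂ) ^ k j

/-- The multiple polylogarithm
`Li_{k₁,…,k_r}(z₁,…,z_r) = ∑_{0<m₁<⋯<m_r} z₁^{m₁}⋯z_r^{m_r} / (m₁^{k₁}⋯m_r^{k_r})`,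
with `m_j = n₁ + ⋯ + n_j`. -/
noncomputable def LiM {r : ℕ} (k : Fin r → ℕ) (z : Fin r → ℂ) : ℂ :=
  ∑' n : Fin r → ℕ+, (∏ j, z j ^ (∑ ν ∈ Finset.Iic j, (n ν : ℕ))) /
    ∏ j, (((∑ ν ∈ Finset.Iic j, (n ν : ℕ)) : ℕ) : ℂ) ^ k j



theorem Iic_castSucc_eq {r : ℕ} (i : Fin r) :
    Finset.Iic i.castSucc = (Finset.Iic i).map Fin.castSuccEmb := by
  apply Finset.map_injective Fin.valEmbedding
  rw [Finset.map_map, Fin.map_valEmbedding_Iic]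
  have : (Fin.castSuccEmb.trans Fin.valEmbedding : Fin r ↪ ℕ) = Fin.valEmbedding := by
    ext a; rfl
  rw [this, Fin.map_valEmbedding_Iic]
  rfl

theorem sum_Iic_castSucc {r : ℕ} (f : Fin (r+1) → ℕ) (i : Fin r) :
    ∑ ν ∈ Finset.Iic i.castSucc, f ν = ∑ ν ∈ Finset.Iic i, f ν.castSucc := by
  rw [Iic_castSucc_eq, Finset.sum_map]; rfl

theorem Iic_last_eq {r : ℕ} : Finset.Iic (Fin.last r) = Finset.univ := by
  ext ν; simp [Fin.le_last]

theorem summable_pi_prod {s : ℕ} {g : ℕ+ → ℝ} (hg : Summable g) (h0 : ∀ m, 0 ≤ g m) :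
    Summable fun n : Fin s → ℕ+ => ∏ j, g (n j) := by
  induction s with
  | zero => exact summable_of_finite_support (Set.toFinite _)
  | succ s ih =>
    rw [← (Fin.snocEquiv fun _ => ℕ+).summable_iff]
    have h := hg.mul_of_nonneg ih h0 (fun n => Finset.prod_nonneg fun j _ => h0 _)
    refine h.congr fun p => ?_
    simp only [Function.comp, Fin.snocEquiv_apply, Fin.prod_univ_castSucc, Fin.snoc_castSucc,
      Fin.snoc_last]
    ring


noncomputable def Dd {s : ℕ} (k : Fin s → ℕ) (n : Fin s → ℕ+) : ℂ :=
  ∏ j, (((∑ ν ∈ Finset.Iic j, (n ν : ℕ)) : ℕ) : ℂ) ^ k j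

noncomputable def Fterm {s : ℕ} (k : Fin s → ℕ) (y t : ℂ) (n : Fin s → ℕ+) : ℂ :=
  (∏ j, t ^ (n j : ℕ) * (1 - y ^ (n j : ℕ))) / Dd k n


theorem Dd_eq_natCast {s : ℕ} (k : Fin s → ℕ) (n : Fin s → ℕ+) :
    Dd k n = ((∏ j, (∑ ν ∈ Finset.Iic j, (n ν : ℕ)) ^ k j : ℕ) : ℂ) := by
  simp [Dd]

theorem one_le_Dnat {s : ℕ} (k : Fin s → ℕ) (n : Fin s → ℕ+) :
    1 ≤ ∏ j, (∑ ν ∈ Finset.Iic j, (n ν : ℕ)) ^ k j := by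
  refine Nat.one_le_iff_ne_zero.mpr (Finset.prod_ne_zero_iff.mpr fun j _ => ?_)
  refine pow_ne_zero _ ?_
  have : (1:ℕ) ≤ ∑ ν ∈ Finset.Iic j, (n ν : ℕ) :=
    le_trans (n j).one_le (Finset.single_le_sum (f := fun ν => ((n ν : ℕ)))
      (fun _ _ => Nat.zero_le _) (Finset.mem_Iic.mpr le_rfl))
  omega

theorem one_le_norm_Dd {s : ℕ} (k : Fin s → ℕ) (n : Fin s → ℕ+) : 1 ≤ ‖Dd k n‖ := by
  rw [Dd_eq_natCast, Complex.norm_natCast]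
  exact_mod_cast one_le_Dnat k n

theorem Dd_ne_zero {s : ℕ} (k : Fin s → ℕ) (n : Fin s → ℕ+) : Dd k n ≠ 0 := by
  intro h
  have := one_le_norm_Dd k n
  rw [h] at this; simp at this; linarith

theorem norm_one_sub_pow_le {y : ℂ} (hy : ‖y‖ ≤ 1) (m : ℕ) : ‖1 - y ^ m‖ ≤ 2 := by
  calc ‖1 - y ^ m‖ ≤ ‖(1:ℂ)‖ + ‖y ^ m‖ := norm_sub_le _ _
    _ ≤ 1 + 1 := by
        rw [norm_one, norm_pow]
        have : ‖y‖ ^ m ≤ 1 := pow_le_one₀ (norm_nonneg _) hy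
        linarith
    _ = 2 := by norm_num

theorem norm_Fterm_le {s : ℕ} (k : Fin s → ℕ) {y : ℂ} (hy : ‖y‖ ≤ 1) (t : ℂ)
    (n : Fin s → ℕ+) : ‖Fterm k y t n‖ ≤ ∏ j, 2 * ‖t‖ ^ (n j : ℕ) := by
  rw [Fterm, norm_div]
  calc ‖∏ j, t ^ (n j:ℕ) * (1 - y ^ (n j:ℕ))‖ / ‖Dd k n‖
      ≤ ‖∏ j, t ^ (n j:ℕ) * (1 - y ^ (n j:ℕ))‖ :=
        div_le_self (norm_nonneg _) (one_le_norm_Dd k n)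
    _ ≤ ∏ j, 2 * ‖t‖ ^ (n j:ℕ) := by
        rw [norm_prod]
        refine Finset.prod_le_prod (fun j _ => norm_nonneg _) fun j _ => ?_
        rw [norm_mul, norm_pow]
        calc ‖t‖ ^ (n j:ℕ) * ‖1 - y ^ (n j:ℕ)‖ ≤ ‖t‖ ^ (n j:ℕ) * 2 :=
              mul_le_mul_of_nonneg_left (norm_one_sub_pow_le hy _) (pow_nonneg (norm_nonneg _) _)
          _ = 2 * ‖t‖ ^ (n j:ℕ) := by ring

theorem summable_pnat_of_nat {g : ℕ → ℝ} (hg : Summable g) :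
    Summable fun m : ℕ+ => g (m : ℕ) :=
  hg.comp_injective (fun a b h => PNat.coe_injective h)

noncomputable def Fterm' {s : ℕ} (k : Fin s → ℕ) (y t : ℂ) (n : Fin s → ℕ+) : ℂ :=
  ((∑ j, (n j : ℕ) : ℕ) : ℂ) * t ^ ((∑ j, (n j : ℕ)) - 1) *
    ((∏ j, (1 - y ^ (n j : ℕ))) / Dd k n)

theorem Fterm_eq_pow_mul {s : ℕ} (k : Fin s → ℕ) (y t : ℂ) (n : Fin s → ℕ+) :
    Fterm k y t n = t ^ (∑ j, (n j : ℕ)) * ((∏ j, (1 - y ^ (n j : ℕ))) / Dd k n) := by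
  rw [Fterm, Finset.prod_mul_distrib, Finset.prod_pow_eq_pow_sum]
  ring

theorem hasDerivAt_Fterm {s : ℕ} (k : Fin s → ℕ) (y t : ℂ) (n : Fin s → ℕ+) :
    HasDerivAt (fun t => Fterm k y t n) (Fterm' k y t n) t := by
  have h := (hasDerivAt_pow (∑ j, (n j : ℕ)) t).mul_const
    ((∏ j, (1 - y ^ (n j : ℕ))) / Dd k n)
  have he : (fun t : ℂ => Fterm k y t n) =
      fun t : ℂ => t ^ (∑ j, (n j : ℕ)) * ((∏ j, (1 - y ^ (n j : ℕ))) / Dd k n) :=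
    funext fun t => Fterm_eq_pow_mul k y t n
  rw [he, Fterm']
  exact h

-- real bound
theorem key_real_bound {s : ℕ} (hs : 1 ≤ s) {R : ℝ} (hR : 0 < R) (n : Fin s → ℕ+) :
    ((∑ j, (n j : ℕ) : ℕ) : ℝ) * R ^ ((∑ j, (n j : ℕ)) - 1) * 2 ^ s ≤
      (s * 2 ^ s / R) * ∏ j, ((n j : ℝ) * R ^ (n j : ℕ)) := by
  have hprod1 : (1:ℝ) ≤ ∏ j, (n j : ℝ) := by
    have : 1 ≤ ∏ j, (n j : ℕ) :=
      Nat.one_le_iff_ne_zero.mpr (Finset.prod_ne_zero_iff.mpr fun j _ => (n j).ne_zero)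
    exact_mod_cast this
  have hM : ((∑ j, (n j : ℕ) : ℕ) : ℝ) ≤ s * ∏ j, (n j : ℝ) := by
    have : (∑ j, (n j : ℕ)) ≤ s * ∏ j, (n j : ℕ) := by
      calc (∑ j, (n j : ℕ)) ≤ ∑ _j : Fin s, ∏ i, (n i : ℕ) := by
            refine Finset.sum_le_sum fun j _ => ?_
            exact Finset.single_le_prod' (f := fun i => (n i : ℕ))
              (fun i _ => (n i).one_le) (Finset.mem_univ j)
        _ = s * ∏ i, (n i : ℕ) := by rw [Finset.sum_const, Finset.card_univ]; simp
    exact_mod_cast this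
  have hMpos : 1 ≤ ∑ j, (n j : ℕ) := by
    have : (1:ℕ) ≤ s := hs
    calc 1 ≤ s := hs
      _ = ∑ _j : Fin s, 1 := by simp
      _ ≤ ∑ j, (n j : ℕ) := Finset.sum_le_sum fun j _ => (n j).one_le
  have hpow : R ^ ((∑ j, (n j : ℕ)) - 1) = (∏ j, R ^ (n j : ℕ)) / R := by
    rw [Finset.prod_pow_eq_pow_sum, eq_div_iff (ne_of_gt hR), ← pow_succ]
    congr 1
    omega
  rw [hpow]
  have hRp : (0:ℝ) ≤ ∏ j, R ^ (n j : ℕ) :=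
    Finset.prod_nonneg fun j _ => pow_nonneg hR.le _
  calc ((∑ j, (n j : ℕ) : ℕ) : ℝ) * ((∏ j, R ^ (n j : ℕ)) / R) * 2 ^ s
      ≤ (s * ∏ j, (n j : ℝ)) * ((∏ j, R ^ (n j : ℕ)) / R) * 2 ^ s := by
        gcongr
    _ = (s * 2 ^ s / R) * ((∏ j, (n j : ℝ)) * ∏ j, R ^ (n j : ℕ)) := by
        field_simp
    _ = (s * 2 ^ s / R) * ∏ j, ((n j : ℝ) * R ^ (n j : ℕ)) := by
        rw [Finset.prod_mul_distrib]

theorem norm_Fterm'_le {s : ℕ} (hs : 1 ≤ s) (k : Fin s → ℕ) {y : ℂ} (hy : ‖y‖ ≤ 1)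
    {R : ℝ} (hR : 0 < R) {t : ℂ} (ht : ‖t‖ ≤ R) (n : Fin s → ℕ+) :
    ‖Fterm' k y t n‖ ≤ (s * 2 ^ s / R) * ∏ j, ((n j : ℝ) * R ^ (n j : ℕ)) := by
  refine le_trans ?_ (key_real_bound hs hR n)
  rw [Fterm', norm_mul, norm_mul, Complex.norm_natCast, norm_pow]
  have hQ : ‖(∏ j, (1 - y ^ (n j : ℕ))) / Dd k n‖ ≤ 2 ^ s := by
    rw [norm_div]
    refine le_trans (div_le_self (norm_nonneg _) (one_le_norm_Dd k n)) ?_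
    rw [norm_prod]
    calc ∏ j, ‖1 - y ^ (n j : ℕ)‖ ≤ ∏ _j : Fin s, (2:ℝ) :=
          Finset.prod_le_prod (fun j _ => norm_nonneg _) fun j _ => norm_one_sub_pow_le hy _
      _ = 2 ^ s := by simp
  have h1 : ‖t‖ ^ ((∑ j, (n j : ℕ)) - 1) ≤ R ^ ((∑ j, (n j : ℕ)) - 1) :=
    pow_le_pow_left₀ (norm_nonneg _) ht _
  have h0 : (0:ℝ) ≤ ((∑ j, (n j : ℕ) : ℕ) : ℝ) := Nat.cast_nonneg _
  calc ((∑ j, (n j : ℕ) : ℕ) : ℝ) * ‖t‖ ^ ((∑ j, (n j : ℕ)) - 1) *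
        ‖(∏ j, (1 - y ^ (n j : ℕ))) / Dd k n‖
      ≤ ((∑ j, (n j : ℕ) : ℕ) : ℝ) * R ^ ((∑ j, (n j : ℕ)) - 1) * 2 ^ s := by
        have := mul_le_mul (mul_le_mul_of_nonneg_left h1 h0) hQ (norm_nonneg _)
          (by positivity)
        exact this

theorem summable_u {s : ℕ} {R : ℝ} (hR0 : 0 < R) (hR1 : R < 1) (C : ℝ) :
    Summable fun n : Fin s → ℕ+ => C * ∏ j, ((n j : ℝ) * R ^ (n j : ℕ)) := by
  refine Summable.mul_left C (summable_pi_prod (g := fun m : ℕ+ => (m : ℝ) * R ^ (m : ℕ)) ?_ ?_)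
  · have h : Summable fun m : ℕ => (m : ℝ) ^ 1 * R ^ m :=
      summable_pow_mul_geometric_of_norm_lt_one 1
        (by rwa [Real.norm_eq_abs, abs_of_pos hR0])
    have := summable_pnat_of_nat h
    refine this.congr fun m => ?_
    simp
  · intro m
    positivity

theorem summable_norm_Fterm {s : ℕ} (k : Fin s → ℕ) {y : ℂ} (hy : ‖y‖ ≤ 1) {t : ℂ}
    (ht : ‖t‖ < 1) : Summable fun n : Fin s → ℕ+ => ‖Fterm k y t n‖ := by
  refine Summable.of_nonneg_of_le (fun n => norm_nonneg _) (norm_Fterm_le k hy t)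
    (summable_pi_prod (g := fun m : ℕ+ => 2 * ‖t‖ ^ (m : ℕ)) ?_ fun m => by positivity)
  exact summable_pnat_of_nat ((summable_geometric_of_lt_one (norm_nonneg t) ht).mul_left 2)

theorem LL_hasDerivAt_aux (r : ℕ) (k : Fin (r + 1) → ℕ) {y : ℂ} (hy : ‖y‖ ≤ 1) {x : ℂ}
    (hx : ‖x‖ < 1) :
    HasDerivAt (fun t : ℂ => LL k t y) (∑' n : Fin (r+1) → ℕ+, Fterm' k y x n) x := by
  set R : ℝ := (‖x‖ + 1) / 2 with hRdef
  have hR0 : 0 < R := by positivity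
  have hxR : ‖x‖ < R := by rw [hRdef]; linarith
  have hR1 : R < 1 := by rw [hRdef]; linarith
  have hLL : (fun t : ℂ => LL k t y) = fun t : ℂ => ∑' n : Fin (r+1) → ℕ+, Fterm k y t n :=
    rfl
  rw [hLL]
  refine hasDerivAt_tsum_of_isPreconnected (y₀ := (0:ℂ))
    (u := fun n : Fin (r+1) → ℕ+ => ((r+1 : ℕ) * 2 ^ (r+1) / R) * ∏ j, ((n j : ℝ) * R ^ (n j : ℕ)))
    (summable_u hR0 hR1 _) Metric.isOpen_ball (convex_ball (0:ℂ) R).isPreconnected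
    (fun n t _ => hasDerivAt_Fterm k y t n) (fun n t htt => ?_) ?_ ?_ ?_
  · have ht : ‖t‖ ≤ R := le_of_lt (mem_ball_zero_iff.mp htt)
    exact_mod_cast norm_Fterm'_le (by omega) k hy hR0 ht n
  · exact mem_ball_zero_iff.mpr (by simpa using hR0)
  · refine (summable_zero).congr fun n => ?_
    rw [Fterm_eq_pow_mul]
    have : (0:ℂ) ^ (∑ j, (n j : ℕ)) = 0 := by
      refine zero_pow ?_
      have := (n 0).one_le
      have h0 : 1 ≤ ∑ j, (n j : ℕ) :=
        le_trans (n 0).one_le (Finset.single_le_sum (f := fun j => ((n j : ℕ)))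
          (fun _ _ => Nat.zero_le _) (Finset.mem_univ 0))
      omega
    rw [this, zero_mul]
  · exact mem_ball_zero_iff.mpr hxR

theorem Dd_split_last (r : ℕ) (k : Fin (r+1) → ℕ) (hk : 1 ≤ k (Fin.last r))
    (n : Fin (r+1) → ℕ+) :
    Dd k n = Dd (Function.update k (Fin.last r) (k (Fin.last r) - 1)) n *
      ((∑ j, (n j : ℕ) : ℕ) : ℂ) := by
  rw [Dd, Dd, Fin.prod_univ_castSucc, Fin.prod_univ_castSucc]
  have hne : ∀ i : Fin r, Function.update k (Fin.last r) (k (Fin.last r) - 1) i.castSucc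
      = k i.castSucc := fun i =>
    Function.update_of_ne (Fin.castSucc_lt_last i).ne _ _
  simp only [hne, Function.update_self]
  have hlast : (∑ ν ∈ Finset.Iic (Fin.last r), (n ν : ℕ)) = ∑ j, (n j : ℕ) := by
    rw [Iic_last_eq]
  rw [hlast]
  have : (((∑ j, (n j : ℕ) : ℕ) : ℂ)) ^ k (Fin.last r)
      = ((∑ j, (n j : ℕ) : ℕ) : ℂ) ^ (k (Fin.last r) - 1) * ((∑ j, (n j : ℕ) : ℕ) : ℂ) := by
    rw [← pow_succ]
    congr 1
    omega
  rw [this]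
  ring

theorem sum_univ_pnat_ne_zero {s : ℕ} (hs : 1 ≤ s) (n : Fin s → ℕ+) :
    ((∑ j, (n j : ℕ) : ℕ) : ℂ) ≠ 0 := by
  have h0 : 1 ≤ ∑ j, (n j : ℕ) := by
    have : (1:ℕ) ≤ s := hs
    calc 1 ≤ s := hs
      _ = ∑ _j : Fin s, 1 := by simp
      _ ≤ ∑ j, (n j : ℕ) := Finset.sum_le_sum fun j _ => (n j).one_le
  exact_mod_cast Nat.one_le_iff_ne_zero.mp h0

theorem tsum_Fterm'_case1 (r : ℕ) (k : Fin (r+1) → ℕ) (h1 : 1 < k (Fin.last r))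
    (y x : ℂ) (hx0 : x ≠ 0) :
    ∑' n : Fin (r+1) → ℕ+, Fterm' k y x n =
      1 / x * LL (Function.update k (Fin.last r) (k (Fin.last r) - 1)) x y := by
  have hLL : LL (Function.update k (Fin.last r) (k (Fin.last r) - 1)) x y
      = ∑' n : Fin (r+1) → ℕ+, Fterm (Function.update k (Fin.last r) (k (Fin.last r) - 1)) y x n :=
    rfl
  rw [hLL, ← tsum_mul_left]
  refine tsum_congr fun n => ?_
  set k' := Function.update k (Fin.last r) (k (Fin.last r) - 1) with hk'
  rw [Fterm_eq_pow_mul, Fterm', Dd_split_last r k (by omega) n]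
  have hM : ((∑ j, (n j : ℕ) : ℕ) : ℂ) ≠ 0 := sum_univ_pnat_ne_zero (by omega) n
  have hD : Dd k' n ≠ 0 := Dd_ne_zero k' n
  have hxp : x ^ (∑ j, (n j : ℕ)) = x ^ ((∑ j, (n j : ℕ)) - 1) * x := by
    rw [← pow_succ]
    congr 1
    have h0 : 1 ≤ ∑ j, (n j : ℕ) :=
      le_trans (n 0).one_le (Finset.single_le_sum (f := fun j => ((n j : ℕ)))
        (fun _ _ => Nat.zero_le _) (Finset.mem_univ 0))
    omega
  rw [hxp]
  push_cast at hM ⊢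
  field_simp
  rw [← hk', mul_div_assoc, div_self hD, mul_one]

theorem snoc_sum {r : ℕ} (n' : Fin r → ℕ+) (m : ℕ+) :
    ∑ j, ((Fin.snoc n' m : Fin (r+1) → ℕ+) j : ℕ) = (∑ i, (n' i : ℕ)) + (m : ℕ) := by
  rw [Fin.sum_univ_castSucc]
  simp

theorem snoc_Iic_sum {r : ℕ} (n' : Fin r → ℕ+) (m : ℕ+) (i : Fin r) :
    ∑ ν ∈ Finset.Iic i.castSucc, ((Fin.snoc n' m : Fin (r+1) → ℕ+) ν : ℕ)
      = ∑ ν ∈ Finset.Iic i, (n' ν : ℕ) := by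
  rw [sum_Iic_castSucc (fun ν => ((Fin.snoc n' m : Fin (r+1) → ℕ+) ν : ℕ)) i]
  refine Finset.sum_congr rfl fun ν _ => ?_
  simp

theorem Dd_snoc {r : ℕ} (k : Fin (r+1) → ℕ) (hk : k (Fin.last r) = 1)
    (n' : Fin r → ℕ+) (m : ℕ+) :
    Dd k (Fin.snoc n' m) =
      Dd (fun j : Fin r => k j.castSucc) n' * (((∑ i, (n' i : ℕ)) + (m : ℕ) : ℕ) : ℂ) := by
  rw [Dd, Dd, Fin.prod_univ_castSucc]
  congr 1
  · refine Finset.prod_congr rfl fun i _ => ?_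
    rw [snoc_Iic_sum]
  · rw [hk, pow_one, Iic_last_eq]
    exact_mod_cast congrArg (fun z : ℕ => (z : ℂ)) (snoc_sum n' m)

theorem Fterm'_snoc {r : ℕ} (k : Fin (r+1) → ℕ) (hk : k (Fin.last r) = 1)
    (y x : ℂ) (n' : Fin r → ℕ+) (m : ℕ+) :
    Fterm' k y x (Fin.snoc n' m) =
      (x ^ ((m : ℕ) - 1) * (1 - y ^ (m : ℕ))) * Fterm (fun j : Fin r => k j.castSucc) y x n' := by
  rw [Fterm', Fterm_eq_pow_mul, Dd_snoc k hk, snoc_sum]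
  have hQ : (∏ j, (1 - y ^ ((Fin.snoc n' m : Fin (r+1) → ℕ+) j : ℕ)))
      = (∏ i, (1 - y ^ (n' i : ℕ))) * (1 - y ^ (m : ℕ)) := by
    rw [Fin.prod_univ_castSucc]
    simp
  rw [hQ]
  have hMm : (((∑ i, (n' i : ℕ)) + (m : ℕ) : ℕ) : ℂ) ≠ 0 := by
    have : 1 ≤ (∑ i, (n' i : ℕ)) + (m : ℕ) := le_trans m.one_le (Nat.le_add_left _ _)
    exact_mod_cast Nat.one_le_iff_ne_zero.mp this
  have hD : Dd (fun j : Fin r => k j.castSucc) n' ≠ 0 := Dd_ne_zero _ n'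
  have hxp : x ^ ((∑ i, (n' i : ℕ)) + (m : ℕ) - 1)
      = x ^ (∑ i, (n' i : ℕ)) * x ^ ((m : ℕ) - 1) := by
    rw [← pow_add]
    congr 1
    have := m.pos
    omega
  rw [hxp]
  push_cast at hMm ⊢
  field_simp

theorem one_sub_ne_zero' {x : ℂ} (hx : ‖x‖ < 1) : (1 : ℂ) - x ≠ 0 := by
  intro h
  have : x = 1 := by linear_combination -h
  rw [this] at hx
  simp at hx

theorem tsum_h_eq {x y : ℂ} (hx : ‖x‖ < 1) (hy : ‖y‖ ≤ 1) :
    ∑' m : ℕ+, x ^ ((m : ℕ) - 1) * (1 - y ^ (m : ℕ))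
      = (1 - y) / ((1 - x) * (1 - x * y)) := by
  have hxy : ‖x * y‖ < 1 := by
    rw [norm_mul]
    calc ‖x‖ * ‖y‖ ≤ ‖x‖ * 1 := by gcongr
      _ < 1 := by rwa [mul_one]
  rw [← Equiv.pnatEquivNat.symm.tsum_eq (fun m : ℕ+ => x ^ ((m : ℕ) - 1) * (1 - y ^ (m : ℕ)))]
  have heq : (fun n : ℕ => x ^ (((Equiv.pnatEquivNat.symm n : ℕ+) : ℕ) - 1) *
      (1 - y ^ ((Equiv.pnatEquivNat.symm n : ℕ+) : ℕ)))
      = fun n : ℕ => x ^ n - y * (x * y) ^ n := by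
    funext n
    have h1 : ((Equiv.pnatEquivNat.symm n : ℕ+) : ℕ) = n + 1 := by
      simp [Equiv.pnatEquivNat, Nat.succPNat]
    rw [h1]
    simp only [Nat.add_sub_cancel, pow_succ, mul_pow]
    ring
  rw [heq, (summable_geometric_of_norm_lt_one hx).tsum_sub
    ((summable_geometric_of_norm_lt_one hxy).mul_left y),
    tsum_geometric_of_norm_lt_one hx, tsum_mul_left,
    tsum_geometric_of_norm_lt_one hxy]
  have h1 : (1:ℂ) - x ≠ 0 := one_sub_ne_zero' hx
  have h2 : (1:ℂ) - x * y ≠ 0 := one_sub_ne_zero' hxy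
  field_simp
  ring

theorem summable_norm_h {x y : ℂ} (hx : ‖x‖ < 1) (hy : ‖y‖ ≤ 1) :
    Summable fun m : ℕ+ => ‖x ^ ((m : ℕ) - 1) * (1 - y ^ (m : ℕ))‖ := by
  rw [← Equiv.summable_iff Equiv.pnatEquivNat.symm]
  refine Summable.of_nonneg_of_le (fun n => norm_nonneg _) (fun n => ?_)
    ((summable_geometric_of_lt_one (norm_nonneg x) hx).mul_left 2)
  have h1 : ((Equiv.pnatEquivNat.symm n : ℕ+) : ℕ) = n + 1 := by
    simp [Equiv.pnatEquivNat, Nat.succPNat]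
  show ‖x ^ (((Equiv.pnatEquivNat.symm n : ℕ+) : ℕ) - 1) *
      (1 - y ^ ((Equiv.pnatEquivNat.symm n : ℕ+) : ℕ))‖ ≤ 2 * ‖x‖ ^ n
  rw [h1]
  simp only [Nat.add_sub_cancel, norm_mul, norm_pow]
  calc ‖x‖ ^ n * ‖1 - y ^ (n+1)‖ ≤ ‖x‖ ^ n * 2 :=
        mul_le_mul_of_nonneg_left (norm_one_sub_pow_le hy _) (pow_nonneg (norm_nonneg _) _)
    _ = 2 * ‖x‖ ^ n := by ring

set_option maxHeartbeats 1000000 in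
theorem tsum_Fterm'_case2 (r : ℕ) (k : Fin (r+1) → ℕ) (h1 : k (Fin.last r) = 1)
    {y : ℂ} (hy : ‖y‖ ≤ 1) {x : ℂ} (hx : ‖x‖ < 1) :
    ∑' n : Fin (r+1) → ℕ+, Fterm' k y x n =
      (1 - y) / ((1 - x) * (1 - x * y)) * LL (fun j : Fin r => k j.castSucc) x y := by
  have hLL : LL (fun j : Fin r => k j.castSucc) x y
      = ∑' n' : Fin r → ℕ+, Fterm (fun j : Fin r => k j.castSucc) y x n' := rfl
  rw [← (Fin.snocEquiv (fun _ : Fin (r+1) => ℕ+)).tsum_eq (fun n => Fterm' k y x n)]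
  have hterm : (fun p : ℕ+ × (Fin r → ℕ+) =>
      Fterm' k y x ((Fin.snocEquiv (fun _ : Fin (r+1) => ℕ+)) p))
      = fun p : ℕ+ × (Fin r → ℕ+) => (x ^ ((p.1 : ℕ) - 1) * (1 - y ^ (p.1 : ℕ))) *
          Fterm (fun j : Fin r => k j.castSucc) y x p.2 := by
    funext p
    have : ((Fin.snocEquiv (fun _ : Fin (r+1) => ℕ+)) p) = Fin.snoc p.2 p.1 := rfl
    rw [this, Fterm'_snoc k h1 y x p.2 p.1]
  rw [hterm]
  have hS : Summable (Fterm (fun j : Fin r => k j.castSucc) y x) :=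
    (summable_norm_Fterm (fun j : Fin r => k j.castSucc) hy hx).of_norm
  have hsum : Summable (fun p : ℕ+ × (Fin r → ℕ+) =>
      (x ^ ((p.1 : ℕ) - 1) * (1 - y ^ (p.1 : ℕ))) *
        Fterm (fun j : Fin r => k j.castSucc) y x p.2) :=
    summable_mul_of_summable_norm (f := fun m : ℕ+ => x ^ ((m : ℕ) - 1) * (1 - y ^ (m : ℕ)))
      (g := Fterm (fun j : Fin r => k j.castSucc) y x)
      (summable_norm_h hx hy) (summable_norm_Fterm (fun j : Fin r => k j.castSucc) hy hx)
  have h1' : ∀ m : ℕ+, Summable (fun n' : Fin r → ℕ+ =>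
      (x ^ ((m : ℕ) - 1) * (1 - y ^ (m : ℕ))) * Fterm (fun j : Fin r => k j.castSucc) y x n') :=
    fun m => hS.mul_left _
  have key := Summable.tsum_prod' (f := fun p : ℕ+ × (Fin r → ℕ+) =>
      (x ^ ((p.1 : ℕ) - 1) * (1 - y ^ (p.1 : ℕ))) *
        Fterm (fun j : Fin r => k j.castSucc) y x p.2) hsum h1'
  rw [key]
  have hinner : ∀ m : ℕ+, ∑' n' : Fin r → ℕ+,
      (x ^ ((m : ℕ) - 1) * (1 - y ^ (m : ℕ))) * Fterm (fun j : Fin r => k j.castSucc) y x n'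
      = (x ^ ((m : ℕ) - 1) * (1 - y ^ (m : ℕ))) *
          ∑' n' : Fin r → ℕ+, Fterm (fun j : Fin r => k j.castSucc) y x n' :=
    fun m => tsum_mul_left
  calc ∑' (m : ℕ+), ∑' (n' : Fin r → ℕ+),
        (x ^ ((m : ℕ) - 1) * (1 - y ^ (m : ℕ))) * Fterm (fun j : Fin r => k j.castSucc) y x n'
      = ∑' (m : ℕ+), (x ^ ((m : ℕ) - 1) * (1 - y ^ (m : ℕ))) *
          ∑' n' : Fin r → ℕ+, Fterm (fun j : Fin r => k j.castSucc) y x n' :=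
        tsum_congr hinner
    _ = (∑' (m : ℕ+), x ^ ((m : ℕ) - 1) * (1 - y ^ (m : ℕ))) *
          ∑' n' : Fin r → ℕ+, Fterm (fun j : Fin r => k j.castSucc) y x n' := tsum_mul_right
    _ = (1 - y) / ((1 - x) * (1 - x * y)) * LL (fun j : Fin r => k j.castSucc) x y := by
        rw [tsum_h_eq hx hy, hLL]


theorem LL_hasDerivAt (r : ℕ) (k : Fin (r + 1) → ℕ) (hk : ∀ j, 1 ≤ k j)
    (y : ℂ) (hy : ‖y‖ ≤ 1) (x : ℂ) (hx : ‖x‖ < 1) :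
    (1 < k (Fin.last r) → x ≠ 0 →
      HasDerivAt (fun t : ℂ => LL k t y)
        (1 / x * LL (Function.update k (Fin.last r) (k (Fin.last r) - 1)) x y) x) ∧
    (k (Fin.last r) = 1 →
      HasDerivAt (fun t : ℂ => LL k t y)
        ((1 - y) / ((1 - x) * (1 - x * y)) * LL (fun j : Fin r => k j.castSucc) x y) x) := by
  constructor
  · intro h1 hx0
    have H := LL_hasDerivAt_aux r k hy hx
    rwa [tsum_Fterm'_case1 r k h1 y x hx0] at H
  · intro h1
    have H := LL_hasDerivAt_aux r k hy hx
    rwa [tsum_Fterm'_case2 r k h1 hy hx] at H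
end

section
/- (Five-term relation for the dilogarithm.) For real $x, y$ with $0 < x < 1$ and $0 < y < 1$: $\mathrm{Li}_2(x) + \mathrm{Li}_2(y) + \mathrm{Li}_2(1-xy) + \mathrm{Li}_2\left(\frac{1-x}{1-xy}\right) + \mathrm{Li}_2\left(\frac{1-y}{1-xy}\right) = 3\zeta(2) - \log x \log(1-x) - \log y \log(1-y) - \log\left(\frac{1-x}{1-xy}\right)\log\left(\frac{1-y}{1-xy}\right)$. -/
open Real Set Filter Topology


/-- The real dilogarithm `Li₂(z) = ∑_{n ≥ 1} z^n / n²`. -/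
noncomputable def dilog (z : ℝ) : ℝ := ∑' n : ℕ, z ^ (n + 1) / ((n + 1 : ℕ) : ℝ) ^ 2


lemma aux_summable : Summable (fun n : ℕ => 1 / ((n + 1 : ℕ) : ℝ) ^ 2) := by
  have h : Summable (fun n : ℕ => 1 / ((n : ℕ) : ℝ) ^ 2) :=
    summable_one_div_nat_pow.mpr (by norm_num)
  exact (summable_nat_add_iff (f := fun n : ℕ => 1 / ((n : ℕ) : ℝ) ^ 2) 1).mpr h

lemma dilog_zero : dilog 0 = 0 := by
  simp [dilog]

lemma dilog_one : dilog 1 = π ^ 2 / 6 := by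
  have h : HasSum (fun n : ℕ => (1 : ℝ) / ((n + 1 : ℕ) : ℝ) ^ 2) (π ^ 2 / 6) := by
    have h0 := hasSum_zeta_two
    rw [← hasSum_nat_add_iff' 1] at h0
    simpa using h0
  simpa [dilog] using h.tsum_eq

lemma dilog_continuousOn : ContinuousOn dilog (Icc (-1 : ℝ) 1) := by
  apply continuousOn_tsum (u := fun n : ℕ => 1 / ((n + 1 : ℕ) : ℝ) ^ 2)
  · intro i
    exact ((continuous_pow _).continuousOn).div_const _
  · exact aux_summable
  · intro n z hz
    have hz' : |z| ≤ 1 := abs_le.2 ⟨hz.1, hz.2⟩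
    have hc : (0 : ℝ) < ((n + 1 : ℕ) : ℝ) ^ 2 := by positivity
    rw [Real.norm_eq_abs, abs_div, abs_pow, abs_of_pos hc]
    gcongr
    exact pow_le_one₀ (abs_nonneg z) hz'


lemma dilog_hasDerivAt {z : ℝ} (h0 : 0 < z) (h1 : z < 1) :
    HasDerivAt dilog (-Real.log (1 - z) / z) z := by
  set r : ℝ := (1 + z) / 2 with hrdef
  have hr0 : 0 < r := by positivity
  have hr1 : r < 1 := by simp only [hrdef]; linarith
  have hzr : z < r := by simp only [hrdef]; linarith
  have key : HasDerivAt (fun w => ∑' n : ℕ, w ^ (n + 1) / ((n + 1 : ℕ) : ℝ) ^ 2)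
      (∑' n : ℕ, z ^ n / ((n + 1 : ℕ) : ℝ)) z := by
    apply hasDerivAt_tsum_of_isPreconnected
      (u := fun n : ℕ => r ^ n)
      (g := fun (n : ℕ) (w : ℝ) => w ^ (n + 1) / ((n + 1 : ℕ) : ℝ) ^ 2)
      (g' := fun (n : ℕ) (w : ℝ) => w ^ n / ((n + 1 : ℕ) : ℝ))
      (t := Ioo (-r) r) (y₀ := 0)
      (summable_geometric_of_lt_one hr0.le hr1) isOpen_Ioo isPreconnected_Ioo
    · intro n w _
      have h := (hasDerivAt_pow (n + 1) w).div_const (((n + 1 : ℕ) : ℝ) ^ 2)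
      refine h.congr_deriv (Eq.symm ?_)
      have hn : ((n + 1 : ℕ) : ℝ) ≠ 0 := by positivity
      simp only [Nat.add_sub_cancel]
      field_simp
    · intro n w hw
      have hwr : |w| ≤ r := le_of_lt (abs_lt.2 ⟨hw.1, hw.2⟩)
      have hn1 : (1 : ℝ) ≤ ((n + 1 : ℕ) : ℝ) := by exact_mod_cast Nat.one_le_iff_ne_zero.mpr (Nat.succ_ne_zero n)
      rw [Real.norm_eq_abs, abs_div, abs_pow, abs_of_pos (by positivity : (0:ℝ) < ((n + 1 : ℕ) : ℝ))]
      calc |w| ^ n / ((n + 1 : ℕ) : ℝ) ≤ |w| ^ n / 1 := by gcongr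
        _ = |w| ^ n := div_one _
        _ ≤ r ^ n := pow_le_pow_left₀ (abs_nonneg w) hwr n
    · exact ⟨by linarith, hr0⟩
    · apply summable_zero.congr
      intro n; simp
    · exact ⟨by linarith, hzr⟩
  have hlog : HasSum (fun n : ℕ => z ^ n / ((n + 1 : ℕ) : ℝ)) (-Real.log (1 - z) / z) := by
    have h := hasSum_pow_div_log_of_abs_lt_one (x := z) (by rw [abs_of_pos h0]; exact h1)
    have h2 := h.div_const z
    refine h2.congr_fun ?_
    intro n
    have hz : z ≠ 0 := ne_of_gt h0
    push_cast
    field_simp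
    ring
  have : dilog = fun w => ∑' n : ℕ, w ^ (n + 1) / ((n + 1 : ℕ) : ℝ) ^ 2 := rfl
  rw [this, ← hlog.tsum_eq]
  exact key


lemma const_on_Ioo {f : ℝ → ℝ} (hf : ∀ z ∈ Ioo (0:ℝ) 1, HasDerivAt f 0 z)
    {a b : ℝ} (ha : a ∈ Ioo (0:ℝ) 1) (hb : b ∈ Ioo (0:ℝ) 1) : f a = f b := by
  wlog hab : a ≤ b with H
  · exact (H hf hb ha (le_of_not_ge hab)).symm
  have hsub : Icc a b ⊆ Ioo (0:ℝ) 1 := fun x hx =>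
    ⟨lt_of_lt_of_le ha.1 hx.1, lt_of_le_of_lt hx.2 hb.2⟩
  have hcont : ContinuousOn f (Icc a b) := fun x hx =>
    ((hf x (hsub hx)).continuousAt).continuousWithinAt
  have h := constant_of_has_deriv_right_zero hcont (fun x hx =>
    ((hf x (hsub ⟨hx.1, hx.2.le⟩)).hasDerivWithinAt))
  exact (h b (right_mem_Icc.2 hab)).symm

lemma eq_zero_of_deriv_zero {f : ℝ → ℝ} (hderiv : ∀ z ∈ Ioo (0:ℝ) 1, HasDerivAt f 0 z)
    (hlim : Tendsto f (𝓝[>] (0:ℝ)) (𝓝 0)) : ∀ z ∈ Ioo (0:ℝ) 1, f z = 0 := by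
  intro z hz
  have hconst : ∀ w ∈ Ioo (0:ℝ) 1, f w = f z := fun w hw => const_on_Ioo hderiv hw hz
  have hmem : Ioo (0:ℝ) 1 ∈ 𝓝[>] (0:ℝ) := Ioo_mem_nhdsGT_of_mem ⟨le_refl 0, one_pos⟩
  have ht : Tendsto f (𝓝[>] (0:ℝ)) (𝓝 (f z)) := by
    refine tendsto_const_nhds.congr' ?_
    filter_upwards [hmem] with w hw using (hconst w hw).symm
  exact tendsto_nhds_unique ht hlim

lemma tendsto_log_mul_log :
    Tendsto (fun x : ℝ => Real.log x * Real.log (1 - x)) (𝓝[>] (0:ℝ)) (𝓝 0) := by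
  have h1 : Tendsto (fun x : ℝ => Real.log x * x) (𝓝[>] (0:ℝ)) (𝓝 0) := by
    have h := tendsto_log_mul_rpow_nhdsGT_zero one_pos
    refine h.congr' ?_
    filter_upwards [self_mem_nhdsWithin] with x hx
    rw [rpow_one]
  have hd : HasDerivAt (fun x : ℝ => Real.log (1 - x)) (-1) 0 := by
    have inner : HasDerivAt (fun x : ℝ => 1 - x) (-1) 0 := by
      simpa using (hasDerivAt_id (0:ℝ)).const_sub 1
    have h := (Real.hasDerivAt_log (by norm_num : (1:ℝ) - 0 ≠ 0)).comp 0 inner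
    refine h.congr_deriv (Eq.symm ?_)
    norm_num
  have h3 := hasDerivAt_iff_tendsto_slope.mp hd
  have h2 : Tendsto (fun x : ℝ => Real.log (1 - x) / x) (𝓝[>] (0:ℝ)) (𝓝 (-1)) := by
    have h4 : Tendsto (slope (fun x : ℝ => Real.log (1 - x)) 0) (𝓝[>] (0:ℝ)) (𝓝 (-1)) :=
      h3.mono_left (nhdsWithin_mono _ (fun x hx => ne_of_gt hx))
    refine h4.congr' ?_
    filter_upwards [self_mem_nhdsWithin] with x hx
    simp [slope_def_field]
  have h5 := h1.mul h2
  rw [zero_mul] at h5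
  refine h5.congr' ?_
  filter_upwards [self_mem_nhdsWithin] with x hx
  have : x ≠ 0 := ne_of_gt hx
  field_simp


lemma dilog_tendsto {l : Filter ℝ} {c : ℝ} {f : ℝ → ℝ} (hf : Tendsto f l (𝓝 c))
    (hc : c ∈ Icc (-1:ℝ) 1) (hmem : ∀ᶠ x in l, f x ∈ Icc (-1:ℝ) 1) :
    Tendsto (fun x => dilog (f x)) l (𝓝 (dilog c)) :=
  (dilog_continuousOn c hc).tendsto.comp (tendsto_nhdsWithin_iff.mpr ⟨hf, hmem⟩)

lemma dilog_reflection {z : ℝ} (h0 : 0 < z) (h1 : z < 1) :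
    dilog z + dilog (1 - z) = π ^ 2 / 6 - Real.log z * Real.log (1 - z) := by
  set g : ℝ → ℝ := fun t => dilog t + dilog (1 - t) + Real.log t * Real.log (1 - t) - π ^ 2 / 6
    with hg
  have hderiv : ∀ t ∈ Ioo (0:ℝ) 1, HasDerivAt g 0 t := by
    intro t ht
    obtain ⟨ht0, ht1⟩ := ht
    have h1t0 : (0:ℝ) < 1 - t := by linarith
    have d1 : HasDerivAt dilog (-Real.log (1 - t) / t) t := dilog_hasDerivAt ht0 ht1
    have inner : HasDerivAt (fun t : ℝ => 1 - t) (-1) t := by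
      simpa using (hasDerivAt_id t).const_sub 1
    have d2 : HasDerivAt (fun t : ℝ => dilog (1 - t)) (Real.log t / (1 - t)) t := by
      have outer := dilog_hasDerivAt (z := 1 - t) h1t0 (by linarith)
      have h := outer.comp t inner
      refine h.congr_deriv (Eq.symm ?_)
      rw [sub_sub_cancel]
      field_simp
    have d3 : HasDerivAt (fun t : ℝ => Real.log t * Real.log (1 - t))
        (Real.log (1 - t) / t - Real.log t / (1 - t)) t := by
      have l1 : HasDerivAt Real.log t⁻¹ t := Real.hasDerivAt_log (ne_of_gt ht0)
      have l2 : HasDerivAt (fun t : ℝ => Real.log (1 - t)) ((1 - t)⁻¹ * (-1)) t :=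
        (Real.hasDerivAt_log (ne_of_gt h1t0)).comp t inner
      have h := l1.mul l2
      refine h.congr_deriv (Eq.symm ?_)
      field_simp
      ring
    have h := ((d1.add d2).add d3).sub_const (π ^ 2 / 6)
    refine h.congr_deriv (Eq.symm ?_)
    ring
  have hlim : Tendsto g (𝓝[>] (0:ℝ)) (𝓝 0) := by
    have hmem : Ioo (0:ℝ) 1 ∈ 𝓝[>] (0:ℝ) := Ioo_mem_nhdsGT_of_mem ⟨le_refl 0, one_pos⟩
    have t1 : Tendsto (fun t : ℝ => dilog t) (𝓝[>] (0:ℝ)) (𝓝 (dilog 0)) := by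
      apply dilog_tendsto (tendsto_id.mono_left nhdsWithin_le_nhds) (by norm_num)
      filter_upwards [hmem] with t ht
      simp only [id_eq]
      exact ⟨by linarith [ht.1], ht.2.le⟩
    have t2 : Tendsto (fun t : ℝ => dilog (1 - t)) (𝓝[>] (0:ℝ)) (𝓝 (dilog 1)) := by
      have hsub : Tendsto (fun t : ℝ => 1 - t) (𝓝[>] (0:ℝ)) (𝓝 1) := by
        have h' : Tendsto (fun t : ℝ => 1 - t) (𝓝 (0:ℝ)) (𝓝 (1 - 0)) :=
          tendsto_const_nhds.sub tendsto_id
        simpa using h'.mono_left nhdsWithin_le_nhds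
      apply dilog_tendsto hsub (by norm_num)
      filter_upwards [hmem] with t ht
      constructor <;> [linarith [ht.2]; linarith [ht.1]]
    have h := ((t1.add t2).add tendsto_log_mul_log).sub_const (π ^ 2 / 6)
    rw [dilog_zero, dilog_one] at h
    convert h using 2
    ring
  have := eq_zero_of_deriv_zero hderiv hlim z ⟨h0, h1⟩
  simp only [hg] at this
  linarith

theorem five_term_relation (x y : ℝ) (hx0 : 0 < x) (hx1 : x < 1) (hy0 : 0 < y) (hy1 : y < 1) :
    dilog x + dilog y + dilog (1 - x * y) + dilog ((1 - x) / (1 - x * y)) +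
        dilog ((1 - y) / (1 - x * y)) =
      3 * (Real.pi ^ 2 / 6) - Real.log x * Real.log (1 - x) -
        Real.log y * Real.log (1 - y) -
        Real.log ((1 - x) / (1 - x * y)) * Real.log ((1 - y) / (1 - x * y)) := by
  set F : ℝ → ℝ := fun t => dilog t + dilog y + dilog (1 - t * y)
      + dilog ((1 - t) / (1 - t * y)) + dilog ((1 - y) / (1 - t * y)) - 3 * (π ^ 2 / 6)
      + Real.log t * Real.log (1 - t) + Real.log y * Real.log (1 - y)
      + Real.log ((1 - t) / (1 - t * y)) * Real.log ((1 - y) / (1 - t * y)) with hF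
  have h1y : (0:ℝ) < 1 - y := by linarith
  have hderiv : ∀ t ∈ Ioo (0:ℝ) 1, HasDerivAt F 0 t := by
    intro t ht
    obtain ⟨ht0, ht1⟩ := ht
    have h1t : (0:ℝ) < 1 - t := by linarith
    have hu0 : (0:ℝ) < 1 - t * y := by nlinarith
    have hu1 : 1 - t * y < 1 := by nlinarith
    have hat : 1 - t < 1 - t * y := by nlinarith
    have hbt : 1 - y < 1 - t * y := by nlinarith
    have ha0 : (0:ℝ) < (1 - t) / (1 - t * y) := div_pos h1t hu0
    have ha1 : (1 - t) / (1 - t * y) < 1 := (div_lt_one hu0).2 hat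
    have hb0 : (0:ℝ) < (1 - y) / (1 - t * y) := div_pos h1y hu0
    have hb1 : (1 - y) / (1 - t * y) < 1 := (div_lt_one hu0).2 hbt
    -- inner derivatives
    have i1 : HasDerivAt (fun t : ℝ => 1 - t) (-1) t := by
      simpa using (hasDerivAt_id t).const_sub 1
    have iu : HasDerivAt (fun t : ℝ => 1 - t * y) (-y) t := by
      simpa using ((hasDerivAt_id t).mul_const y).const_sub 1
    have ia : HasDerivAt (fun t : ℝ => (1 - t) / (1 - t * y))
        (((-1) * (1 - t * y) - (1 - t) * (-y)) / (1 - t * y) ^ 2) t :=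
      i1.div iu (ne_of_gt hu0)
    have ib : HasDerivAt (fun t : ℝ => (1 - y) / (1 - t * y))
        ((0 * (1 - t * y) - (1 - y) * (-y)) / (1 - t * y) ^ 2) t :=
      (hasDerivAt_const t (1 - y)).div iu (ne_of_gt hu0)
    -- main pieces
    have d1 : HasDerivAt dilog (-Real.log (1 - t) / t) t := dilog_hasDerivAt ht0 ht1
    have d3 := (dilog_hasDerivAt hu0 hu1).comp t iu
    have d4 := (dilog_hasDerivAt ha0 ha1).comp t ia
    have d5 := (dilog_hasDerivAt hb0 hb1).comp t ib
    have l1 : HasDerivAt Real.log t⁻¹ t := Real.hasDerivAt_log (ne_of_gt ht0)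
    have l2 : HasDerivAt (fun t : ℝ => Real.log (1 - t)) ((1 - t)⁻¹ * (-1)) t :=
      (Real.hasDerivAt_log (ne_of_gt h1t)).comp t i1
    have d6 := l1.mul l2
    have la := (Real.hasDerivAt_log (ne_of_gt ha0)).comp t ia
    have lb := (Real.hasDerivAt_log (ne_of_gt hb0)).comp t ib
    have d8 := la.mul lb
    have dd := (((((((d1.add (hasDerivAt_const t (dilog y))).add d3).add d4).add d5).sub_const
      (3 * (π ^ 2 / 6))).add d6).add (hasDerivAt_const t (Real.log y * Real.log (1 - y)))).add d8
    refine dd.congr_deriv (Eq.symm ?_)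
    have e1 : 1 - (1 - t * y) = t * y := by ring
    have e2 : 1 - (1 - t) / (1 - t * y) = (t * (1 - y)) / (1 - t * y) := by
      field_simp
      ring
    have e3 : 1 - (1 - y) / (1 - t * y) = (y * (1 - t)) / (1 - t * y) := by
      rw [eq_div_iff hu0.ne', sub_mul, div_mul_cancel₀ _ hu0.ne']
      ring
    simp only [Function.comp_apply]
    rw [e1, e2, e3, Real.log_mul ht0.ne' hy0.ne',
      Real.log_div (mul_ne_zero ht0.ne' h1y.ne') hu0.ne',
      Real.log_mul ht0.ne' h1y.ne',
      Real.log_div (mul_ne_zero hy0.ne' h1t.ne') hu0.ne',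
      Real.log_mul hy0.ne' h1t.ne',
      Real.log_div h1t.ne' hu0.ne', Real.log_div h1y.ne' hu0.ne']
    have ht0' := ht0.ne'
    have h1t' := h1t.ne'
    have hu0' := hu0.ne'
    have h1y' := h1y.ne'
    field_simp
    ring
  have hlim : Tendsto F (𝓝[>] (0:ℝ)) (𝓝 0) := by
    have hmem : Ioo (0:ℝ) 1 ∈ 𝓝[>] (0:ℝ) := Ioo_mem_nhdsGT_of_mem ⟨le_refl 0, one_pos⟩
    have hIoo : ∀ t ∈ Ioo (0:ℝ) 1, (0:ℝ) < 1 - t * y ∧ 1 - t * y < 1 ∧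
        (0:ℝ) < (1 - t) / (1 - t * y) ∧ (1 - t) / (1 - t * y) < 1 ∧
        (0:ℝ) < (1 - y) / (1 - t * y) ∧ (1 - y) / (1 - t * y) < 1 := by
      intro t ⟨ht0, ht1⟩
      have h1t : (0:ℝ) < 1 - t := by linarith
      have hu0 : (0:ℝ) < 1 - t * y := by nlinarith
      refine ⟨hu0, by nlinarith, div_pos h1t hu0, (div_lt_one hu0).2 (by nlinarith),
        div_pos h1y hu0, (div_lt_one hu0).2 (by nlinarith)⟩
    have hu : Tendsto (fun t : ℝ => 1 - t * y) (𝓝[>] (0:ℝ)) (𝓝 1) := by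
      have h' : Tendsto (fun t : ℝ => 1 - t * y) (𝓝 (0:ℝ)) (𝓝 (1 - 0 * y)) :=
        tendsto_const_nhds.sub (tendsto_id.mul_const y)
      simpa using h'.mono_left nhdsWithin_le_nhds
    have hone : Tendsto (fun t : ℝ => 1 - t) (𝓝[>] (0:ℝ)) (𝓝 1) := by
      have h' : Tendsto (fun t : ℝ => 1 - t) (𝓝 (0:ℝ)) (𝓝 (1 - 0)) :=
        tendsto_const_nhds.sub tendsto_id
      simpa using h'.mono_left nhdsWithin_le_nhds
    have hadiv : Tendsto (fun t : ℝ => (1 - t) / (1 - t * y)) (𝓝[>] (0:ℝ)) (𝓝 1) := by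
      have := hone.div hu one_ne_zero
      rw [div_one] at this
      exact this
    have hbdiv : Tendsto (fun t : ℝ => (1 - y) / (1 - t * y)) (𝓝[>] (0:ℝ)) (𝓝 (1 - y)) := by
      have hconst : Tendsto (fun _ : ℝ => (1 - y)) (𝓝[>] (0:ℝ)) (𝓝 (1 - y)) := tendsto_const_nhds
      have := hconst.div hu one_ne_zero
      rw [div_one] at this
      exact this
    have t1 : Tendsto (fun t : ℝ => dilog t) (𝓝[>] (0:ℝ)) (𝓝 (dilog 0)) := by
      apply dilog_tendsto (tendsto_id.mono_left nhdsWithin_le_nhds) (by norm_num)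
      filter_upwards [hmem] with t ht
      simp only [id_eq]
      exact ⟨by linarith [ht.1], ht.2.le⟩
    have t3 : Tendsto (fun t : ℝ => dilog (1 - t * y)) (𝓝[>] (0:ℝ)) (𝓝 (dilog 1)) := by
      apply dilog_tendsto hu (by norm_num)
      filter_upwards [hmem] with t ht
      obtain ⟨c1, c2, _⟩ := hIoo t ht
      exact ⟨by linarith, by linarith⟩
    have t4 : Tendsto (fun t : ℝ => dilog ((1 - t) / (1 - t * y))) (𝓝[>] (0:ℝ)) (𝓝 (dilog 1)) := by
      apply dilog_tendsto hadiv (by norm_num)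
      filter_upwards [hmem] with t ht
      obtain ⟨_, _, c3, c4, _⟩ := hIoo t ht
      exact ⟨by linarith, by linarith⟩
    have t5 : Tendsto (fun t : ℝ => dilog ((1 - y) / (1 - t * y))) (𝓝[>] (0:ℝ))
        (𝓝 (dilog (1 - y))) := by
      apply dilog_tendsto hbdiv (by constructor <;> linarith)
      filter_upwards [hmem] with t ht
      obtain ⟨_, _, _, _, c5, c6⟩ := hIoo t ht
      exact ⟨by linarith, by linarith⟩
    have t8 : Tendsto (fun t : ℝ => Real.log ((1 - t) / (1 - t * y)) *
        Real.log ((1 - y) / (1 - t * y))) (𝓝[>] (0:ℝ)) (𝓝 0) := by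
      have la : Tendsto (fun t : ℝ => Real.log ((1 - t) / (1 - t * y))) (𝓝[>] (0:ℝ)) (𝓝 0) := by
        have hcont := (Real.continuousAt_log (one_ne_zero)).tendsto
        have := hcont.comp hadiv
        rw [Real.log_one] at this
        exact this
      have lb : Tendsto (fun t : ℝ => Real.log ((1 - y) / (1 - t * y))) (𝓝[>] (0:ℝ))
          (𝓝 (Real.log (1 - y))) := by
        have hcont := (Real.continuousAt_log h1y.ne').tendsto
        exact hcont.comp hbdiv
      have := la.mul lb
      simpa using this
    have c1 : Tendsto (fun _ : ℝ => dilog y) (𝓝[>] (0:ℝ)) (𝓝 (dilog y)) := tendsto_const_nhds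
    have c2 : Tendsto (fun _ : ℝ => Real.log y * Real.log (1 - y)) (𝓝[>] (0:ℝ))
        (𝓝 (Real.log y * Real.log (1 - y))) := tendsto_const_nhds
    have hsum := ((((((((t1.add c1).add t3).add t4).add t5).sub_const
      (3 * (π ^ 2 / 6))).add tendsto_log_mul_log).add c2).add t8)
    rw [dilog_zero, dilog_one] at hsum
    have hrefl := dilog_reflection hy0 hy1
    convert hsum using 2
    linarith
  have hx := eq_zero_of_deriv_zero hderiv hlim x ⟨hx0, hx1⟩
  simp only [hF] at hx
  linarith
end
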